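/- arXiv:math/0410030 — 5 statements merged into one kernel-verified Lean document; each statement's English description precedes it below -/
import Mathlib

section
/- The cover pebbling number of the path P_n on n vertices is 2^n - 1. -/
open SimpleGraph Finset

/-- A pebbling step: remove two pebbles from `u` and place one on an adjacent vertex `v`. -/
def PebblingStep {V : Type*} [DecidableEq V] (G : SimpleGraph V) (D D' : V → ℕ) : Prop :=
  ∃ u v, G.Adj u v ∧ 2 ≤ D u ∧
    D' = fun w => if w = u then D u - 2 else if w = v then D v + 1 else D w

/-- A distribution is coverable if pebbling steps can put a pebble on every vertex. -/
def Coverable {V : Type*} [DecidableEq V] (G : SimpleGraph V) (D : V → ℕ) : Prop :=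
  ∃ D', Relation.ReflTransGen (PebblingStep G) D D' ∧ ∀ v, 1 ≤ D' v

/-- The cover pebbling number: the least `N` such that every distribution of `N` pebbles
is coverable. -/
noncomputable def coverPebblingNumber {V : Type*} [DecidableEq V] [Fintype V]
    (G : SimpleGraph V) : ℕ :=
  sInf {N | ∀ D : V → ℕ, ∑ v, D v = N → Coverable G D}

/-- A color-respecting pebbling step on a colored distribution. -/
def ColorStep {V C : Type*} [DecidableEq V] [DecidableEq C] (G : SimpleGraph V)
    (D D' : V → C → ℕ) : Prop :=
  ∃ u v c, G.Adj u v ∧ 2 ≤ D u c ∧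
    D' = fun w d => if w = u ∧ d = c then D u c - 2
      else if w = v ∧ d = c then D v c + 1 else D w d

/-- A colored distribution is `Q`-coverable if color-respecting steps can put at least `Q`
pebbles on every vertex. -/
def QCoverable {V C : Type*} [DecidableEq V] [DecidableEq C] [Fintype C] (G : SimpleGraph V)
    (Q : ℕ) (D : V → C → ℕ) : Prop :=
  ∃ D', Relation.ReflTransGen (ColorStep G) D D' ∧ ∀ v, Q ≤ ∑ c, D' v c

/-- A graph is good if its cover pebbling number is realized by a simple distribution. -/
def IsGood {V : Type*} [DecidableEq V] [Fintype V] (G : SimpleGraph V) : Prop :=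
  ∃ u : V, coverPebblingNumber G = ∑ w : V, 2 ^ G.dist u w

namespace PathCoverAux

lemma sum_two_pow (n : ℕ) : ∑ i ∈ Finset.range n, 2^i = 2^n - 1 := by
  induction n with
  | zero => simp
  | succ n ih =>
    rw [Finset.sum_range_succ, ih]
    have : 0 < 2^n := Nat.pow_pos (by norm_num)
    rw [pow_succ]
    omega

/-- Weight monovariant. -/
def W {n : ℕ} (D : Fin n → ℕ) : ℕ := ∑ v, D v * 2^(v : ℕ)

lemma W_step {n : ℕ} {D D' : Fin n → ℕ} (h : PebblingStep (pathGraph n) D D') :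
    W D' ≤ W D := by
  obtain ⟨u, v, hadj, hu, hD⟩ := h
  have hne : u ≠ v := hadj.ne
  have key : ∀ x, D' x * 2^(x:ℕ) + (if x = u then 2 * 2^(u:ℕ) else 0)
      = D x * 2^(x:ℕ) + (if x = v then 2^(v:ℕ) else 0) := by
    intro x
    subst hD
    by_cases h1 : x = u
    · subst h1
      obtain ⟨d, hd⟩ : ∃ d, D x = d + 2 := ⟨D x - 2, by omega⟩
      simp [hne, hd]
      ring
    · by_cases h2 : x = v
      · subst h2
        simp [h1, Ne.symm hne]
        ring
      · simp [h1, h2]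
  have hsum : ∑ x, (D' x * 2^(x:ℕ) + (if x = u then 2 * 2^(u:ℕ) else 0))
      = ∑ x, (D x * 2^(x:ℕ) + (if x = v then 2^(v:ℕ) else 0)) :=
    Finset.sum_congr rfl fun x _ => key x
  rw [Finset.sum_add_distrib, Finset.sum_add_distrib, Finset.sum_ite_eq' Finset.univ u,
    Finset.sum_ite_eq' Finset.univ v] at hsum
  simp only [Finset.mem_univ, if_pos] at hsum
  have hcv : 2^(v:ℕ) ≤ 2 * 2^(u:ℕ) := by
    rw [pathGraph_adj] at hadj
    rcases hadj with h | h
    · have : 2^(v:ℕ) = 2^((u:ℕ)+1) := by rw [h]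
      rw [this, pow_succ]; omega
    · have : 2^(v:ℕ) ≤ 2^(u:ℕ) := Nat.pow_le_pow_right (by norm_num) (by omega)
      omega
  unfold W
  omega

lemma W_rtg {n : ℕ} {D D' : Fin n → ℕ}
    (h : Relation.ReflTransGen (PebblingStep (pathGraph n)) D D') : W D' ≤ W D := by
  induction h with
  | refl => exact le_rfl
  | tail _ hstep ih => exact le_trans (W_step hstep) ih

/-- Move `j` pebbles from `u` to adjacent `v` via `j` steps. -/
lemma moveMany {V : Type*} [DecidableEq V] (G : SimpleGraph V) {u v : V}
    (hadj : G.Adj u v) (j : ℕ) (D : V → ℕ) (h : 2 * j ≤ D u) :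
    Relation.ReflTransGen (PebblingStep G) D
      (fun w => if w = u then D u - 2 * j else if w = v then D v + j else D w) := by
  induction j generalizing D with
  | zero =>
    have : (fun w => if w = u then D u - 2 * 0 else if w = v then D v + 0 else D w) = D := by
      funext w
      by_cases h1 : w = u
      · subst h1; simp
      · by_cases h2 : w = v
        · subst h2; simp [h1]
        · simp [h1, h2]
    rw [this]
  | succ j ih =>
    have hne : u ≠ v := hadj.ne
    have step1 : PebblingStep G D
        (fun w => if w = u then D u - 2 else if w = v then D v + 1 else D w) :=
      ⟨u, v, hadj, by omega, rfl⟩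
    have h2 : 2 * j ≤ (fun w => if w = u then D u - 2 else if w = v then D v + 1 else D w) u := by
      simp; omega
    have htail := ih (fun w => if w = u then D u - 2 else if w = v then D v + 1 else D w) h2
    have heq : (fun w => if w = u
          then (fun w => if w = u then D u - 2 else if w = v then D v + 1 else D w) u - 2 * j
          else if w = v
          then (fun w => if w = u then D u - 2 else if w = v then D v + 1 else D w) v + j
          else (fun w => if w = u then D u - 2 else if w = v then D v + 1 else D w) w)
        = (fun w => if w = u then D u - 2 * (j+1) else if w = v then D v + (j+1) else D w) := by
      funext w
      simp only []
      by_cases h1 : w = u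
      · subst h1
        simp [hne]
        omega
      · by_cases h3 : w = v
        · subst h3
          simp [h1, Ne.symm hne]
          omega
        · simp [h1, h3]
    rw [heq] at htail
    exact Relation.ReflTransGen.head step1 htail

/-- Lifting a pebbling step on `pathGraph (n+1)` to `pathGraph (n+2)` via snoc. -/
lemma lift_step {n : ℕ} (a : ℕ) {E E' : Fin (n+1) → ℕ}
    (h : PebblingStep (pathGraph (n+1)) E E') :
    PebblingStep (pathGraph (n+2)) (Fin.snoc E a) (Fin.snoc E' a) := by
  obtain ⟨u, v, hadj, hu, hD⟩ := h
  refine ⟨u.castSucc, v.castSucc, ?_, ?_, ?_⟩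
  · rw [pathGraph_adj] at hadj ⊢
    simpa using hadj
  · simpa [Fin.snoc_castSucc] using hu
  · subst hD
    funext w
    refine Fin.lastCases ?_ (fun x => ?_) w
    · have h1 : Fin.last (n+1) ≠ u.castSucc := (Fin.castSucc_lt_last u).ne'
      have h2 : Fin.last (n+1) ≠ v.castSucc := (Fin.castSucc_lt_last v).ne'
      simp [h1, h2]
    · simp [Fin.snoc_castSucc, Fin.castSucc_inj]

lemma lift_rtg {n : ℕ} (a : ℕ) {E E' : Fin (n+1) → ℕ}
    (h : Relation.ReflTransGen (PebblingStep (pathGraph (n+1))) E E') :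
    Relation.ReflTransGen (PebblingStep (pathGraph (n+2))) (Fin.snoc E a) (Fin.snoc E' a) :=
  Relation.ReflTransGen.lift (f := fun E : Fin (n+1) → ℕ => (Fin.snoc E a : Fin (n+2) → ℕ))
    (fun _ _ h => lift_step a h) _ _ h

lemma cover_extra (n : ℕ) : ∀ (m : ℕ) (D : Fin (n+1) → ℕ),
    2^(n+1) - 1 + m * 2^n ≤ ∑ v, D v →
    ∃ D', Relation.ReflTransGen (PebblingStep (pathGraph (n+1))) D D' ∧
      (∀ v, 1 ≤ D' v) ∧ m + 1 ≤ D' (Fin.last n) := by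
  induction n with
  | zero =>
    intro m D h
    rw [Fin.sum_univ_one] at h
    norm_num at h
    refine ⟨D, Relation.ReflTransGen.refl, fun v => ?_, ?_⟩
    · have hv : v = 0 := Fin.fin_one_eq_zero v
      rw [hv]; omega
    · have : Fin.last 0 = 0 := rfl
      rw [this]; omega
  | succ n ih =>
    intro m D h
    set S := ∑ v, D v with hS
    set k := D (Fin.last (n+1)) with hk
    set sl : Fin (n+2) := (Fin.last n).castSucc with hsl
    have hslne : sl ≠ Fin.last (n+1) := (Fin.castSucc_lt_last _).ne
    have hadj_down : (pathGraph (n+2)).Adj (Fin.last (n+1)) sl := by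
      rw [pathGraph_adj]; right; simp [hsl]
    have hadj_up : (pathGraph (n+2)).Adj sl (Fin.last (n+1)) := hadj_down.symm
    have hP : 0 < 2^(n+1) := Nat.pow_pos (by norm_num)
    have hp2 : 2^(n+2) = 2^(n+1) * 2 := pow_succ 2 (n+1)
    have hkS : k ≤ S := by
      rw [hS, hk]
      exact Finset.single_le_sum (fun i _ => Nat.zero_le _) (Finset.mem_univ _)
    have hsplit : S = (∑ x : Fin (n+1), D x.castSucc) + k := by
      rw [hS, Fin.sum_univ_castSucc, hk]
    by_cases hkm : m + 1 ≤ k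
    · -- Case 1: enough pebbles already on the last vertex
      set j := (k - (m+1)) / 2 with hj
      have hjk : 2 * j ≤ k := by omega
      have move := moveMany (pathGraph (n+2)) hadj_down j D (by rw [← hk]; exact hjk)
      set D1 : Fin (n+2) → ℕ := fun w => if w = Fin.last (n+1) then D (Fin.last (n+1)) - 2 * j
        else if w = sl then D sl + j else D w with hD1
      have move' : Relation.ReflTransGen (PebblingStep (pathGraph (n+2))) D D1 := move
      set E : Fin (n+1) → ℕ := fun x => D1 x.castSucc with hE
      have hD1last : D1 (Fin.last (n+1)) = k - 2 * j := by
        rw [hD1]; simp [← hk]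
      have hEsum : ∑ x, E x = (∑ x : Fin (n+1), D x.castSucc) + j := by
        rw [Fin.sum_univ_castSucc (f := E), Fin.sum_univ_castSucc (f := fun x : Fin (n+1) => D x.castSucc)]
        have e1 : E (Fin.last n) = D sl + j := by
          rw [hE]
          simp only [hD1, ← hsl]
          rw [if_neg hslne]
          simp
        have e2 : ∀ y : Fin n, E y.castSucc = D y.castSucc.castSucc := by
          intro y
          rw [hE]
          simp only [hD1]
          have h1 : (y.castSucc.castSucc : Fin (n+2)) ≠ Fin.last (n+1) :=
            (Fin.castSucc_lt_last _).ne
          have h2 : (y.castSucc.castSucc : Fin (n+2)) ≠ sl := by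
            rw [hsl]
            simp only [ne_eq, Fin.castSucc_inj]
            exact (Fin.castSucc_lt_last _).ne
          rw [if_neg h1, if_neg h2]
        rw [e1, Finset.sum_congr rfl fun y _ => e2 y, ← hsl]
        omega
      have hEbound : 2^(n+1) - 1 + 0 * 2^n ≤ ∑ x, E x := by
        have hm : m ≤ m * 2^(n+1) := Nat.le_mul_of_pos_right m hP
        have h2 : 2^(n+2) - 1 + m ≤ S := le_trans (Nat.add_le_add_left hm _) h
        simp only [zero_mul, add_zero]
        omega
      obtain ⟨E', hErtg, hEcov, _⟩ := ih 0 E hEbound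
      have hDeq : D1 = Fin.snoc E (k - 2 * j) := by
        funext w
        refine Fin.lastCases ?_ (fun x => ?_) w
        · rw [Fin.snoc_last, hD1last]
        · rw [Fin.snoc_castSucc, hE]
      refine ⟨Fin.snoc E' (k - 2 * j), ?_, ?_, ?_⟩
      · refine Relation.ReflTransGen.trans ?_ (lift_rtg (k - 2 * j) hErtg)
        rw [← hDeq]; exact move'
      · intro v
        refine Fin.lastCases ?_ (fun x => ?_) v
        · rw [Fin.snoc_last]; omega
        · rw [Fin.snoc_castSucc]; exact hEcov x
      · rw [Fin.snoc_last]; omega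
    · -- Case 2: ship pebbles to the last vertex
      push_neg at hkm
      set E : Fin (n+1) → ℕ := fun x => D x.castSucc with hE
      have hEbound : 2^(n+1) - 1 + (2 * (m + 1 - k)) * 2^n ≤ ∑ x, E x := by
        have e2 : (m + 1 - k) * 2^(n+1) + k * 2^(n+1) = m * 2^(n+1) + 2^(n+1) := by
          rw [← add_mul]
          have e : m + 1 - k + k = m + 1 := by omega
          rw [e, add_mul, one_mul]
        have e3 : k ≤ k * 2^(n+1) := Nat.le_mul_of_pos_right k hP
        have hEs : (∑ x, E x) + k = S := by rw [hsplit]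
        have key : 2^(n+1) - 1 + (2 * (m + 1 - k)) * 2^n + k ≤ S := by
          calc 2^(n+1) - 1 + (2 * (m + 1 - k)) * 2^n + k
              = 2^(n+1) - 1 + (m + 1 - k) * 2^(n+1) + k := by
                rw [show (2 * (m + 1 - k)) * 2^n = (m + 1 - k) * 2^(n+1) by rw [pow_succ]; ring]
            _ ≤ 2^(n+1) - 1 + (m + 1 - k) * 2^(n+1) + k * 2^(n+1) := Nat.add_le_add_left e3 _
            _ = 2^(n+1) - 1 + (m * 2^(n+1) + 2^(n+1)) := by rw [add_assoc, e2]
            _ = 2^(n+2) - 1 + m * 2^(n+1) := by omega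
            _ ≤ S := h
        omega
      obtain ⟨E', hErtg, hEcov, hElast⟩ := ih (2 * (m + 1 - k)) E hEbound
      have hDeq : D = Fin.snoc E k := by
        funext w
        refine Fin.lastCases ?_ (fun x => ?_) w
        · rw [Fin.snoc_last, ← hk]
        · rw [Fin.snoc_castSucc, hE]
      have lft : Relation.ReflTransGen (PebblingStep (pathGraph (n+2))) D (Fin.snoc E' k) := by
        rw [hDeq]; exact lift_rtg k hErtg
      have hcond : 2 * (m + 1 - k) ≤ (Fin.snoc E' k : Fin (n+2) → ℕ) sl := by
        rw [hsl, Fin.snoc_castSucc]; omega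
      have move2 := moveMany (pathGraph (n+2)) hadj_up (m + 1 - k) (Fin.snoc E' k) hcond
      refine ⟨_, Relation.ReflTransGen.trans lft move2, ?_, ?_⟩
      · intro v
        refine Fin.lastCases ?_ (fun x => ?_) v
        · rw [if_neg (Ne.symm hslne), if_pos rfl, Fin.snoc_last]
          omega
        · by_cases hx : x = Fin.last n
          · subst hx
            rw [← hsl, if_pos rfl, hsl, Fin.snoc_castSucc]
            omega
          · have h1 : (x.castSucc : Fin (n+2)) ≠ sl := by
              rw [hsl]; simp only [ne_eq, Fin.castSucc_inj]; exact hx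
            have h2 : (x.castSucc : Fin (n+2)) ≠ Fin.last (n+1) := (Fin.castSucc_lt_last _).ne
            rw [if_neg h1, if_neg h2, Fin.snoc_castSucc]
            exact hEcov x
      · rw [if_neg (Ne.symm hslne), if_pos rfl, Fin.snoc_last]
        omega

end PathCoverAux

open PathCoverAux in
theorem path_cover_pebbling (n : ℕ) (hn : 1 ≤ n) :
    coverPebblingNumber (pathGraph n) = 2 ^ n - 1 := by
  obtain ⟨N, rfl⟩ : ∃ N, n = N + 1 := ⟨n - 1, by omega⟩
  have hmem : ∀ D : Fin (N+1) → ℕ, ∑ v, D v = 2^(N+1) - 1 → Coverable (pathGraph (N+1)) D := by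
    intro D hD
    obtain ⟨D', hrtg, hcov, _⟩ := cover_extra N 0 D (by simp [hD])
    exact ⟨D', hrtg, hcov⟩
  unfold coverPebblingNumber
  apply le_antisymm
  · exact Nat.sInf_le hmem
  · refine le_csInf ⟨2^(N+1) - 1, ?_⟩ ?_
    · exact hmem
    intro M hM
    by_contra hlt
    push_neg at hlt
    set D0 : Fin (N+1) → ℕ := fun v => if v = 0 then M else 0 with hD0
    have hsum : ∑ v, D0 v = M := by simp [hD0]
    obtain ⟨D', hrtg, hcov⟩ := hM D0 hsum
    have h1 : (∑ v, D' v * 2^(v : ℕ)) ≤ ∑ v, D0 v * 2^(v : ℕ) := W_rtg hrtg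
    have h2 : (∑ v, D0 v * 2^(v : ℕ)) = M := by
      simp [hD0, ite_mul]
    have h3 : 2^(N+1) - 1 ≤ ∑ v, D' v * 2^(v : ℕ) := by
      calc 2^(N+1) - 1 = ∑ i ∈ Finset.range (N+1), 2^i := (sum_two_pow _).symm
        _ = ∑ v : Fin (N+1), 2^(v : ℕ) := (Fin.sum_univ_eq_sum_range (fun i => 2^i) (N+1)).symm
        _ ≤ ∑ v, D' v * 2^(v : ℕ) :=
          Finset.sum_le_sum fun v _ => Nat.le_mul_of_pos_left _ (hcov v)
    omega
end

section
/- The cover pebbling number of the cycle C_n on n vertices is 2^r + 2^{n-r+1} - 3, where r = ⌈n/2⌉. -/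
open SimpleGraph Finset

namespace CP

open scoped Fin.CommRing

variable {n : ℕ}

/-- The cycle reflexive-transitive pebbling reachability. -/
abbrev RTG (G : SimpleGraph (Fin n)) := Relation.ReflTransGen (PebblingStep G)

lemma rtg_add {G : SimpleGraph (Fin n)} (E : Fin n → ℕ) {A B : Fin n → ℕ}
    (h : RTG G A B) :
    RTG G (fun v => A v + E v) (fun v => B v + E v) := by
  induction h with
  | refl => exact Relation.ReflTransGen.refl
  | tail _ hstep ih =>
    rename_i b c _
    refine ih.tail ?_
    obtain ⟨u, v, hadj, h2, rfl⟩ := hstep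
    refine ⟨u, v, hadj, by simp only []; omega, funext fun w => ?_⟩
    simp only []
    split_ifs with h1 h2
    · subst h1; omega
    · subst h2; omega
    · omega

section Moves

variable [NeZero n] (hn : 3 ≤ n)
include hn

lemma val_one_of : ((1 : Fin n) : ℕ) = 1 := by
  have h : ((1:ℕ) : Fin n) = 1 := Nat.cast_one
  rw [← h, Fin.val_cast_of_lt (by omega)]

lemma adj_succ (s : Fin n) (i : ℕ) :
    (cycleGraph n).Adj (s + (i : Fin n)) (s + ((i+1 : ℕ) : Fin n)) := by
  rw [cycleGraph_adj']
  right
  have h : (s + ((i+1 : ℕ) : Fin n)) - (s + (i : Fin n)) = 1 := by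
    push_cast
    ring
  rw [h, val_one_of hn]

lemma arc_inj {s : Fin n} {i j : ℕ} (hi : i < n) (hj : j < n)
    (h : s + (i : Fin n) = s + (j : Fin n)) : i = j := by
  have h2 : ((i : Fin n) : ℕ) = ((j : Fin n) : ℕ) := by rw [add_left_cancel h]
  rwa [Fin.val_cast_of_lt hi, Fin.val_cast_of_lt hj] at h2

/-- Move `k` pebbles across one edge (consuming `2k`). -/
lemma move_edge {u v : Fin n} (huv : (cycleGraph n).Adj u v) (k : ℕ) :
    ∀ D : Fin n → ℕ, 2 * k ≤ D u →
    ∃ D', RTG (cycleGraph n) D D' ∧ D' u + 2 * k = D u ∧ D' v = D v + k ∧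
      ∀ w, w ≠ u → w ≠ v → D' w = D w := by
  induction k with
  | zero => exact fun D _ => ⟨D, Relation.ReflTransGen.refl, by omega, by omega,
      fun _ _ _ => rfl⟩
  | succ k ih =>
    intro D hk
    have hne : u ≠ v := huv.ne
    set D1 : Fin n → ℕ := fun w => if w = u then D u - 2 else if w = v then D v + 1 else D w
      with hD1
    have hstep : PebblingStep (cycleGraph n) D D1 := ⟨u, v, huv, by omega, rfl⟩
    have h1u : D1 u = D u - 2 := by simp [hD1]
    have h1v : D1 v = D v + 1 := by simp [hD1, hne.symm]
    obtain ⟨D', hr, hu, hv, hw⟩ := ih D1 (by omega)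
    refine ⟨D', Relation.ReflTransGen.head hstep hr, by omega, by omega, fun w h1 h2 => ?_⟩
    rw [hw w h1 h2, hD1]
    simp [h1, h2]

/-- Transport a pebble along the arc `s + j, s + j + 1, …, s + (j + t)`:
costs `2 ^ t` pebbles at the start, delivers one pebble at the end. -/
lemma transport (s : Fin n) : ∀ t j : ℕ, 1 ≤ t → j + t < n →
    ∀ D : Fin n → ℕ, 2 ^ t ≤ D (s + (j : Fin n)) →
    ∃ D', RTG (cycleGraph n) D D' ∧ D' (s + (j : Fin n)) + 2 ^ t = D (s + (j : Fin n)) ∧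
      D' (s + ((j + t : ℕ) : Fin n)) = D (s + ((j + t : ℕ) : Fin n)) + 1 ∧
      ∀ w, w ≠ s + (j : Fin n) → w ≠ s + ((j + t : ℕ) : Fin n) → D' w = D w := by
  intro t
  induction t with
  | zero => omega
  | succ t ih =>
    intro j _ hjt D hD
    rcases Nat.eq_zero_or_pos t with ht0 | ht1
    · subst ht0
      simp only [Nat.zero_add] at *
      obtain ⟨D', hr, hu, hv, hw⟩ := move_edge hn (adj_succ hn s j) 1 D (by omega)
      exact ⟨D', hr, by omega, by omega, hw⟩
    · -- first move 2^t pebbles to s + (j+1), then recurse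
      obtain ⟨D1, hr1, hu1, hv1, hw1⟩ := move_edge hn (adj_succ hn s j) (2 ^ t) D
        (by rw [← pow_succ']; exact hD)
      have hne1 : s + ((j : ℕ) : Fin n) ≠ s + ((j + 1 : ℕ) : Fin n) := by
        intro h; have := arc_inj hn (i := j) (j := j+1) (by omega) (by omega) h; omega
      obtain ⟨D2, hr2, hu2, hv2, hw2⟩ := ih (j+1) ht1 (by omega) D1 (by omega)
      have hj1t : j + 1 + t = j + (t + 1) := by omega
      rw [hj1t] at hv2 hw2
      have hneA : s + ((j : ℕ) : Fin n) ≠ s + ((j + (t+1) : ℕ) : Fin n) := by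
        intro h; have := arc_inj hn (i := j) (j := j + (t+1)) (by omega) (by omega) h; omega
      have hneB : s + ((j + 1 : ℕ) : Fin n) ≠ s + ((j + (t+1) : ℕ) : Fin n) := by
        intro h; have := arc_inj hn (i := j+1) (j := j + (t+1)) (by omega) (by omega) h; omega
      refine ⟨D2, hr1.trans hr2, ?_, ?_, fun w hwj hwend => ?_⟩
      · rw [hw2 _ hne1 hneA, pow_succ]; omega
      · rw [hv2, hw1 _ hneA.symm hneB.symm]
      · by_cases hw' : w = s + ((j+1 : ℕ) : Fin n)
        · subst hw'
          omega
        · rw [hw2 _ hw' hwend, hw1 _ hwj hw']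

end Moves

lemma sum_pow_desc : ∀ M : ℕ, ∑ i ∈ range M, 2^(M-i) = 2^(M+1) - 2
  | 0 => by simp
  | (M+1) => by
    have h0 : M + 1 - M = 1 := by omega
    rw [Finset.sum_range_succ, h0, pow_one]
    have hc : ∀ i ∈ range M, (2:ℕ)^(M+1-i) = 2*2^(M-i) := fun i hi => by
      have h1 : M+1-i = (M-i)+1 := by have := mem_range.mp hi; omega
      rw [h1, pow_succ]; ring
    rw [Finset.sum_congr rfl hc, ← Finset.mul_sum, sum_pow_desc M]
    have h1 : (1:ℕ) ≤ 2^M := Nat.one_le_two_pow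
    have h2 : (2:ℕ)^(M+1) = 2*2^M := by rw [pow_succ]; ring
    have h3 : (2:ℕ)^(M+2) = 2*2^(M+1) := by rw [pow_succ]; ring
    omega

lemma sum_pow_asc : ∀ k : ℕ, ∑ i ∈ range k, 2^i = 2^k - 1
  | 0 => by simp
  | (k+1) => by
    rw [Finset.sum_range_succ, sum_pow_asc k]
    have h1 : (1:ℕ) ≤ 2^k := Nat.one_le_two_pow
    have h2 : (2:ℕ)^(k+1) = 2*2^k := by rw [pow_succ]; ring
    omega

lemma exists_big (M : ℕ) (f : ℕ → ℕ) (hs : 2^(M+1) ≤ (∑ i ∈ range (M+1), f i) + 1) :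
    ∃ j, j ≤ M ∧ 2^(M-j) ≤ f j := by
  by_contra hcon
  push_neg at hcon
  have h1 : ∑ i ∈ range (M+1), (f i + 1) ≤ ∑ i ∈ range (M+1), 2^(M-i) :=
    Finset.sum_le_sum fun i hi => by
      have := hcon i (by have := mem_range.mp hi; omega); omega
  rw [Finset.sum_add_distrib, Finset.sum_const, Finset.card_range, smul_eq_mul] at h1
  have h2 : ∑ i ∈ range (M+1), (2:ℕ)^(M-i) = 2^(M+1) - 1 := by
    have h0 : M - M = 0 := by omega
    rw [Finset.sum_range_succ, h0, pow_zero, sum_pow_desc M]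
    have h1' : (1:ℕ) ≤ 2^M := Nat.one_le_two_pow
    have h2' : (2:ℕ)^(M+1) = 2*2^M := by rw [pow_succ]; ring
    omega
  omega

lemma exists_big2 (M : ℕ) (f : ℕ → ℕ) (hs : 2^(M+2) ≤ (∑ i ∈ range (M+1), f i) + 2) :
    ∃ j, j ≤ M ∧ 2^(M+1-j) ≤ f j := by
  by_contra hcon
  push_neg at hcon
  have h1 : ∑ i ∈ range (M+1), (f i + 1) ≤ ∑ i ∈ range (M+1), 2^(M+1-i) :=
    Finset.sum_le_sum fun i hi => by
      have := hcon i (by have := mem_range.mp hi; omega); omega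
  rw [Finset.sum_add_distrib, Finset.sum_const, Finset.card_range, smul_eq_mul] at h1
  rw [sum_pow_desc (M+1)] at h1
  have h3 : (2:ℕ)^(M+1+1) = 2^(M+2) := rfl
  rw [h3] at h1
  have h2' : (2:ℕ)^(M+2) ≥ 2 := by
    have : (1:ℕ) ≤ 2^(M+1) := Nat.one_le_two_pow
    have h4 : (2:ℕ)^(M+2) = 2*2^(M+1) := by rw [pow_succ]; ring
    omega
  omega

section Arcs

variable [NeZero n] (hn : 3 ≤ n)
include hn

/-- Covering an arc of `M` vertices using at least `2^M - 1` pebbles on the arc. -/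
lemma arcCover (s : Fin n) : ∀ M, 1 ≤ M → M ≤ n → ∀ D : Fin n → ℕ,
    2 ^ M ≤ (∑ i ∈ range M, D (s + (i : Fin n))) + 1 →
    ∃ D', RTG (cycleGraph n) D D' ∧ (∀ i, i < M → 1 ≤ D' (s + (i : Fin n))) ∧
      ∀ w, (∀ i, i < M → w ≠ s + (i : Fin n)) → D' w = D w := by
  intro M
  induction M with
  | zero => intro h; exact absurd h (by omega)
  | succ M ih =>
    intro _ hMn D hsum
    rcases Nat.eq_zero_or_pos M with rfl | hM1
    · refine ⟨D, Relation.ReflTransGen.refl, ?_, fun w _ => rfl⟩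
      intro i hi
      have hi0 : i = 0 := by omega
      subst hi0
      rw [Finset.sum_range_succ, Finset.sum_range_zero] at hsum
      have h1 : (2:ℕ)^(0+1) = 2 := by norm_num
      omega
    · have hfrM : ∀ i, i < M → s + ((M:ℕ) : Fin n) ≠ s + ((i:ℕ) : Fin n) :=
        fun i hi hc => absurd (arc_inj hn (by omega) (by omega) hc) (by omega)
      by_cases hx : 1 ≤ D (s + ((M:ℕ) : Fin n))
      · -- reserve one pebble at the far end, shift the rest one step back
        have he : M - 1 + 1 = M := by omega
        have hadj : (cycleGraph n).Adj (s + ((M - 1 : ℕ) : Fin n)) (s + ((M:ℕ) : Fin n)) := by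
          have := adj_succ hn s (M-1); rwa [he] at this
        obtain ⟨D1, hr1, hu1, hv1, hw1⟩ :=
          move_edge hn hadj.symm ((D (s + ((M:ℕ):Fin n)) - 1)/2) D (by omega)
        have hmem : M - 1 ∈ range M := Finset.mem_range.mpr (by omega)
        have hsum1 : ∑ i ∈ range M, D1 (s + (i : Fin n)) =
            (∑ i ∈ range M, D (s + (i : Fin n))) + (D (s + ((M:ℕ):Fin n)) - 1)/2 := by
          rw [← Finset.add_sum_erase _ _ hmem,
              ← Finset.add_sum_erase _ (fun i : ℕ => D (s + (i:Fin n))) hmem, hv1]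
          have hcongr : ∀ i ∈ (range M).erase (M-1),
              D1 (s + (i : Fin n)) = D (s + (i:Fin n)) := by
            intro i hi
            obtain ⟨hine, hii⟩ := Finset.mem_erase.mp hi
            have hiM : i < M := mem_range.mp hii
            refine hw1 _ ?_ ?_
            · intro hcc; exact absurd (arc_inj hn (by omega) (by omega) hcc) (by omega)
            · intro hcc; exact absurd (arc_inj hn (by omega) (by omega) hcc) (by omega)
          rw [Finset.sum_congr rfl hcongr]
          omega
        have hp : (2:ℕ)^(M+1) = 2*2^M := by rw [pow_succ]; ring
        have hxle : D (s + ((M:ℕ):Fin n)) ≤ (∑ i ∈ range (M+1), D (s + (i : Fin n))) := by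
          rw [Finset.sum_range_succ]; omega
        rw [Finset.sum_range_succ] at hsum
        obtain ⟨D2, hr2, hcov2, hw2⟩ := ih hM1 (by omega) D1 (by rw [hsum1]; omega)
        refine ⟨D2, hr1.trans hr2, ?_, ?_⟩
        · intro i hi
          rcases Nat.lt_or_ge i M with h | h
          · exact hcov2 i h
          · have hiM : i = M := by omega
            subst hiM
            rw [hw2 _ hfrM]
            omega
        · intro w hwall
          rw [hw2 w (fun i hi => hwall i (by omega)),
              hw1 w (hwall M (by omega)) (hwall (M-1) (by omega))]
      · -- far end empty: bring a pebble there from a rich vertex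
        have hx0 : D (s + ((M:ℕ) : Fin n)) = 0 := by omega
        obtain ⟨j, hjM', hDj⟩ := exists_big M (fun i => D (s + (i:Fin n))) hsum
        have hjM : j < M := by
          rcases Nat.lt_or_ge j M with h | h
          · exact h
          · exfalso
            have hj' : j = M := by omega
            subst hj'
            simp only [Nat.sub_self, pow_zero] at hDj
            omega
        obtain ⟨D1, hr1, hu1, hv1, hw1⟩ := transport hn s (M-j) j (by omega) (by omega) D hDj
        have hjt : j + (M - j) = M := by omega
        rw [hjt] at hv1 hw1
        have hmem : j ∈ range M := Finset.mem_range.mpr hjM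
        have hsum1 : (∑ i ∈ range M, D1 (s + (i : Fin n))) + 2^(M-j) =
            ∑ i ∈ range M, D (s + (i : Fin n)) := by
          rw [← Finset.add_sum_erase _ _ hmem,
              ← Finset.add_sum_erase _ (fun i : ℕ => D (s + (i:Fin n))) hmem]
          have hcongr : ∀ i ∈ (range M).erase j,
              D1 (s + (i : Fin n)) = D (s + (i:Fin n)) := by
            intro i hi
            obtain ⟨hine, hii⟩ := Finset.mem_erase.mp hi
            have hiM : i < M := mem_range.mp hii
            refine hw1 _ ?_ ?_
            · intro hcc; exact absurd (arc_inj hn (by omega) (by omega) hcc) (by omega)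
            · intro hcc; exact absurd (arc_inj hn (by omega) (by omega) hcc) (by omega)
          rw [Finset.sum_congr rfl hcongr]
          omega
        have hp : (2:ℕ)^(M+1) = 2*2^M := by rw [pow_succ]; ring
        have hple : (2:ℕ)^(M-j) ≤ 2^M := Nat.pow_le_pow_right (by norm_num) (by omega)
        rw [Finset.sum_range_succ] at hsum
        obtain ⟨D2, hr2, hcov2, hw2⟩ := ih hM1 (by omega) D1 (by omega)
        refine ⟨D2, hr1.trans hr2, ?_, ?_⟩
        · intro i hi
          rcases Nat.lt_or_ge i M with h | h
          · exact hcov2 i h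
          · have hiM : i = M := by omega
            subst hiM
            rw [hw2 _ hfrM, hv1]
            omega
        · intro w hwall
          rw [hw2 w (fun i hi => hwall i (by omega)),
              hw1 w (hwall j (by omega)) (hwall M (by omega))]

/-- Covering an arc of `M` vertices hanging off a root `s`, with at least `2^(M+1) - 2`
pebbles on the root and the arc. -/
lemma arcCoverRoot (s : Fin n) : ∀ M, M + 1 ≤ n → ∀ D : Fin n → ℕ,
    2 ^ (M+1) ≤ (∑ i ∈ range (M+1), D (s + (i : Fin n))) + 2 →
    ∃ D', RTG (cycleGraph n) D D' ∧ (∀ i, 1 ≤ i → i ≤ M → 1 ≤ D' (s + (i : Fin n))) ∧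
      ∀ w, (∀ i, i ≤ M → w ≠ s + (i : Fin n)) → D' w = D w := by
  intro M
  induction M with
  | zero =>
    intro _ D _
    exact ⟨D, Relation.ReflTransGen.refl, fun i h1 h2 => absurd (h1.trans h2) (by omega),
      fun w _ => rfl⟩
  | succ M ih =>
    intro hMn D hsum
    have hfrM : ∀ i, i ≤ M → s + ((M+1:ℕ) : Fin n) ≠ s + ((i:ℕ) : Fin n) :=
      fun i hi hc => absurd (arc_inj hn (by omega) (by omega) hc) (by omega)
    by_cases hx : 1 ≤ D (s + ((M+1:ℕ) : Fin n))
    · have hadj : (cycleGraph n).Adj (s + ((M : ℕ) : Fin n)) (s + ((M+1:ℕ) : Fin n)) :=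
        adj_succ hn s M
      obtain ⟨D1, hr1, hu1, hv1, hw1⟩ :=
        move_edge hn hadj.symm ((D (s + ((M+1:ℕ):Fin n)) - 1)/2) D (by omega)
      have hmem : M ∈ range (M+1) := Finset.mem_range.mpr (by omega)
      have hsum1 : ∑ i ∈ range (M+1), D1 (s + (i : Fin n)) =
          (∑ i ∈ range (M+1), D (s + (i : Fin n))) + (D (s + ((M+1:ℕ):Fin n)) - 1)/2 := by
        rw [← Finset.add_sum_erase _ _ hmem,
            ← Finset.add_sum_erase _ (fun i : ℕ => D (s + (i:Fin n))) hmem, hv1]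
        have hcongr : ∀ i ∈ (range (M+1)).erase M,
            D1 (s + (i : Fin n)) = D (s + (i:Fin n)) := by
          intro i hi
          obtain ⟨hine, hii⟩ := Finset.mem_erase.mp hi
          have hiM : i < M + 1 := mem_range.mp hii
          refine hw1 _ ?_ ?_
          · intro hcc; exact absurd (arc_inj hn (by omega) (by omega) hcc) (by omega)
          · intro hcc; exact absurd (arc_inj hn (by omega) (by omega) hcc) (by omega)
        rw [Finset.sum_congr rfl hcongr]
        omega
      have hp : (2:ℕ)^(M+2) = 2*2^(M+1) := by rw [pow_succ]; ring
      have hxle : D (s + ((M+1:ℕ):Fin n)) ≤ ∑ i ∈ range (M+2), D (s + (i : Fin n)) := by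
        rw [Finset.sum_range_succ]; omega
      rw [Finset.sum_range_succ] at hsum
      obtain ⟨D2, hr2, hcov2, hw2⟩ := ih (by omega) D1 (by rw [hsum1]; omega)
      refine ⟨D2, hr1.trans hr2, ?_, ?_⟩
      · intro i h1 h2
        rcases Nat.lt_or_ge i (M+1) with h | h
        · exact hcov2 i h1 (by omega)
        · have hiM : i = M + 1 := by omega
          subst hiM
          rw [hw2 _ hfrM]
          omega
      · intro w hwall
        rw [hw2 w (fun i hi => hwall i (by omega)),
            hw1 w (hwall (M+1) (by omega)) (hwall M (by omega))]
    · have hx0 : D (s + ((M+1:ℕ) : Fin n)) = 0 := by omega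
      have hsum' : 2^(M+2) ≤ (∑ i ∈ range (M+1), D (s + (i:Fin n))) + 2 := by
        rw [Finset.sum_range_succ] at hsum
        have hE : (2:ℕ)^(M+1+1) = 2^(M+2) := rfl
        omega
      obtain ⟨j, hjM, hDj⟩ := exists_big2 M (fun i => D (s + (i:Fin n))) hsum'
      obtain ⟨D1, hr1, hu1, hv1, hw1⟩ :=
        transport hn s (M+1-j) j (by omega) (by omega) D hDj
      have hjt : j + (M + 1 - j) = M + 1 := by omega
      rw [hjt] at hv1 hw1
      have hmem : j ∈ range (M+1) := Finset.mem_range.mpr (by omega)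
      have hsum1 : (∑ i ∈ range (M+1), D1 (s + (i : Fin n))) + 2^(M+1-j) =
          ∑ i ∈ range (M+1), D (s + (i : Fin n)) := by
        rw [← Finset.add_sum_erase _ _ hmem,
            ← Finset.add_sum_erase _ (fun i : ℕ => D (s + (i:Fin n))) hmem]
        have hcongr : ∀ i ∈ (range (M+1)).erase j,
            D1 (s + (i : Fin n)) = D (s + (i:Fin n)) := by
          intro i hi
          obtain ⟨hine, hii⟩ := Finset.mem_erase.mp hi
          have hiM : i < M + 1 := mem_range.mp hii
          refine hw1 _ ?_ ?_
          · intro hcc; exact absurd (arc_inj hn (by omega) (by omega) hcc) (by omega)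
          · intro hcc; exact absurd (arc_inj hn (by omega) (by omega) hcc) (by omega)
        rw [Finset.sum_congr rfl hcongr]
        omega
      have hp : (2:ℕ)^(M+2) = 2*2^(M+1) := by rw [pow_succ]; ring
      have hple : (2:ℕ)^(M+1-j) ≤ 2^(M+1) := Nat.pow_le_pow_right (by norm_num) (by omega)
      obtain ⟨D2, hr2, hcov2, hw2⟩ := ih (by omega) D1 (by omega)
      refine ⟨D2, hr1.trans hr2, ?_, ?_⟩
      · intro i h1 h2
        rcases Nat.lt_or_ge i (M+1) with h | h
        · exact hcov2 i h1 (by omega)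
        · have hiM : i = M + 1 := by omega
          subst hiM
          rw [hw2 _ hfrM, hv1]
          omega
      · intro w hwall
        rw [hw2 w (fun i hi => hwall i (by omega)),
            hw1 w (hwall j (by omega)) (hwall (M+1) (by omega))]

end Arcs


/-- `D` can reach a distribution with a pebble on every vertex satisfying `P`. -/
def CoversOn (G : SimpleGraph (Fin n)) (D : Fin n → ℕ) (P : Fin n → Prop) : Prop :=
  ∃ D', RTG G D D' ∧ ∀ v, P v → 1 ≤ D' v

lemma coversOn_mono {G : SimpleGraph (Fin n)} {D : Fin n → ℕ} {P Q : Fin n → Prop}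
    (h : CoversOn G D P) (hPQ : ∀ v, Q v → P v) : CoversOn G D Q := by
  obtain ⟨D', h1, h2⟩ := h
  exact ⟨D', h1, fun v hv => h2 v (hPQ v hv)⟩

lemma coversOn_add {G : SimpleGraph (Fin n)} {D1 D2 : Fin n → ℕ} {P1 P2 : Fin n → Prop}
    (h1 : CoversOn G D1 P1) (h2 : CoversOn G D2 P2) :
    CoversOn G (fun v => D1 v + D2 v) (fun v => P1 v ∨ P2 v) := by
  obtain ⟨E1, hr1, hc1⟩ := h1
  obtain ⟨E2, hr2, hc2⟩ := h2
  have ha : RTG G (fun v => D1 v + D2 v) (fun v => E1 v + D2 v) := rtg_add D2 hr1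
  have hb : RTG G (fun v => D2 v + E1 v) (fun v => E2 v + E1 v) := rtg_add E1 hr2
  have hcomm1 : (fun v => E1 v + D2 v) = (fun v => D2 v + E1 v) := by
    funext v; omega
  refine ⟨fun v => E2 v + E1 v, ?_, ?_⟩
  · rw [hcomm1] at ha
    exact ha.trans hb
  · rintro v (hv | hv)
    · show 1 ≤ E2 v + E1 v
      have := hc1 v hv; omega
    · show 1 ≤ E2 v + E1 v
      have := hc2 v hv; omega

lemma coversOn_sum {G : SimpleGraph (Fin n)} {ι : Type*} (t : Finset ι)
    (f : ι → Fin n → ℕ) (P : ι → Fin n → Prop)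
    (h : ∀ x ∈ t, CoversOn G (f x) (P x)) :
    CoversOn G (fun v => ∑ x ∈ t, f x v) (fun v => ∃ x ∈ t, P x v) := by
  induction t using Finset.cons_induction with
  | empty =>
    refine ⟨fun _ => 0, Relation.ReflTransGen.refl, ?_⟩
    rintro v ⟨x, hx, -⟩
    exact absurd hx (by simp)
  | cons a t ha ih =>
    have hadd := coversOn_add (h a (Finset.mem_cons_self a t))
      (ih (fun x hx => h x (Finset.mem_cons.mpr (Or.inr hx))))
    have he : (fun v => f a v + ∑ x ∈ t, f x v) = (fun v => ∑ x ∈ Finset.cons a t ha, f x v) := by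
      funext v; rw [Finset.sum_cons]
    rw [he] at hadd
    refine coversOn_mono hadd ?_
    rintro v ⟨x, hx, hP⟩
    rcases Finset.mem_cons.mp hx with rfl | hx'
    · exact Or.inl hP
    · exact Or.inr ⟨x, hx', hP⟩

lemma coverable_of_coversOn {G : SimpleGraph (Fin n)} {D : Fin n → ℕ}
    (h : CoversOn G D (fun _ => True)) : Coverable G D := by
  obtain ⟨D', h1, h2⟩ := h
  exact ⟨D', h1, fun v => h2 v trivial⟩

section Windows

variable [NeZero n] (hn : 3 ≤ n)
include hn

lemma sum_shift (x : Fin n) (D : Fin n → ℕ) :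
    ∑ k ∈ range n, D (x + (k : Fin n)) = ∑ v, D v := by
  have h1 : ∑ v : Fin n, D (x + v) = ∑ v, D v :=
    Fintype.sum_equiv (Equiv.addLeft x) _ _ (fun v => rfl)
  rw [← h1, ← Fin.sum_univ_eq_sum_range (fun k => D (x + (k : Fin n))) n]
  exact Finset.sum_congr rfl fun i _ => by rw [Fin.cast_val_eq_self]

lemma find_cut (W g : Fin n → ℕ) (th : ℕ)
    (hsh : ∀ z, W (z + 1) ≤ W z + g z) :
    ∀ (k : ℕ) (z : Fin n), W z ≤ th → th ≤ W (z + (k : Fin n)) →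
      ∃ j, W j ≤ th ∧ th ≤ W j + g j := by
  intro k
  induction k with
  | zero =>
    intro z h1 h2
    simp only [Nat.cast_zero, add_zero] at h2
    exact ⟨z, h1, h2.trans (Nat.le_add_right _ _)⟩
  | succ k ih =>
    intro z h1 h2
    by_cases hc : W (z + 1) ≤ th
    · refine ih (z + 1) hc ?_
      have he : z + ((k+1 : ℕ) : Fin n) = z + 1 + (k : Fin n) := by
        push_cast; ring
      rwa [he] at h2
    · exact ⟨z, h1, le_trans (by omega) (hsh z)⟩

lemma cut_coverable (r : ℕ) (hr2 : 2 ≤ r) (hrn : r < n) (D : Fin n → ℕ)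
    (hγ : ∑ v, D v = 2^r + 2^(n-r+1) - 3) (j : Fin n)
    (hW1 : ∑ i ∈ range (r-1), D (j + (i : Fin n)) ≤ 2^r - 1)
    (hW2 : 2^r - 1 ≤ (∑ i ∈ range (r-1), D (j + (i : Fin n))) + D (j + ((r-1 : ℕ) : Fin n))) :
    Coverable (cycleGraph n) D := by
  set Wj := ∑ i ∈ range (r-1), D (j + (i : Fin n)) with hWj
  set c := j + ((r-1 : ℕ) : Fin n) with hc
  set p := (2^r - 1) - Wj with hp
  have hpc : p ≤ D c := by omega
  set q := D c - p with hq
  classical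
  set piece1 : Fin n → ℕ := fun v =>
    if (v - j).val < r - 1 then D v else if (v - j).val = r - 1 then p else 0 with hpiece1
  set piece2 : Fin n → ℕ := fun v =>
    if (v - j).val < r - 1 then 0 else if (v - j).val = r - 1 then q else D v with hpiece2
  have hvc : ∀ v : Fin n, (v - j).val = r - 1 → v = c := by
    intro v hv
    have h1 : v - j = ((r-1 : ℕ) : Fin n) := by
      apply Fin.val_injective
      rw [hv, Fin.val_cast_of_lt (by omega)]
    rw [hc, ← h1, add_comm]
    exact (sub_add_cancel v j).symm
  have hsplit : ∀ v, piece1 v + piece2 v = D v := by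
    intro v
    rw [hpiece1, hpiece2]
    simp only []
    split_ifs with h1 h2
    · omega
    · rw [hvc v h2]; omega
    · omega
  -- arc points
  have harc : ∀ i : ℕ, i < n → ((j + (i : Fin n)) - j).val = i := by
    intro i hi
    rw [add_comm, add_sub_cancel_right, Fin.val_cast_of_lt hi]
  -- piece1 arc sum
  have hr' : r - 1 + 1 = r := by omega
  have hsum1 : ∑ i ∈ range r, piece1 (j + (i : Fin n)) = 2^r - 1 := by
    rw [← hr', Finset.sum_range_succ, hr']
    have h1 : ∀ i ∈ range (r-1), piece1 (j + (i : Fin n)) = D (j + (i : Fin n)) := by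
      intro i hi
      have hilt : i < r - 1 := mem_range.mp hi
      rw [hpiece1]
      simp only []
      rw [if_pos (by rw [harc i (by omega)]; omega)]
    have h2 : piece1 (j + ((r-1 : ℕ) : Fin n)) = p := by
      rw [hpiece1]
      simp only []
      rw [if_neg (by rw [harc (r-1) (by omega)]; omega), if_pos (harc (r-1) (by omega))]
    rw [Finset.sum_congr rfl h1, h2, ← hWj]
    omega
  -- total decomposition
  have hTot : Wj + D c + (∑ i ∈ range (n-r), D (j + ((r + i : ℕ) : Fin n)))
      = 2^r + 2^(n-r+1) - 3 := by
    rw [← hγ, ← sum_shift hn j D, ← Finset.sum_range_add_sum_Ico _ (le_of_lt hrn)]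
    rw [Finset.sum_Ico_eq_sum_range]
    rw [← hr', Finset.sum_range_succ, hr']
  -- piece2 arc sum
  have hsum2 : ∑ i ∈ range ((n-r)+1), piece2 (c + (i : Fin n))
      = q + ∑ i ∈ range (n-r), D (j + ((r + i : ℕ) : Fin n)) := by
    rw [Finset.sum_range_succ']
    have h0 : piece2 (c + ((0:ℕ) : Fin n)) = q := by
      rw [hpiece2]
      simp only [Nat.cast_zero, add_zero]
      rw [if_neg (by rw [hc, harc (r-1) (by omega)]; omega), if_pos (by rw [hc, harc (r-1) (by omega)])]
    have h1 : ∀ i ∈ range (n-r), piece2 (c + ((i+1 : ℕ) : Fin n)) = D (j + ((r + i : ℕ) : Fin n)) := by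
      intro i hi
      have hilt : i < n - r := mem_range.mp hi
      have he : c + ((i+1 : ℕ) : Fin n) = j + ((r + i : ℕ) : Fin n) := by
        rw [hc, add_assoc, ← Nat.cast_add]
        congr 2
        omega
      rw [he, hpiece2]
      simp only []
      rw [if_neg (by rw [harc (r+i) (by omega)]; omega),
          if_neg (by rw [harc (r+i) (by omega)]; omega)]
    rw [Finset.sum_congr rfl (fun i hi => h1 i hi), h0]
    omega
  -- apply the arc lemmas
  have hone : (1:ℕ) ≤ 2^r := Nat.one_le_two_pow
  have hone2 : (1:ℕ) ≤ 2^(n-r+1) := Nat.one_le_two_pow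
  obtain ⟨E1, hrE1, hcov1, -⟩ := arcCover hn j r (by omega) (by omega) piece1 (by omega)
  obtain ⟨E2, hrE2, hcov2, -⟩ := arcCoverRoot hn c (n-r) (by omega) piece2 (by omega)
  have hC1 : CoversOn (cycleGraph n) piece1 (fun v => ∃ i, i < r ∧ v = j + (i : Fin n)) := by
    refine ⟨E1, hrE1, ?_⟩
    rintro v ⟨i, hi, rfl⟩
    exact hcov1 i hi
  have hC2 : CoversOn (cycleGraph n) piece2
      (fun v => ∃ i, 1 ≤ i ∧ i ≤ n - r ∧ v = c + (i : Fin n)) := by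
    refine ⟨E2, hrE2, ?_⟩
    rintro v ⟨i, hi1, hi2, rfl⟩
    exact hcov2 i hi1 hi2
  have hcomb := coversOn_add hC1 hC2
  have heq : (fun v => piece1 v + piece2 v) = D := funext hsplit
  rw [heq] at hcomb
  apply coverable_of_coversOn
  refine coversOn_mono hcomb ?_
  intro v _
  set k := (v - j).val with hk
  have hkn : k < n := (v - j).isLt
  have hvk : v = j + (k : Fin n) := by
    rw [hk, Fin.cast_val_eq_self, add_comm]
    exact (sub_add_cancel v j).symm
  rcases Nat.lt_or_ge k r with h | h
  · exact Or.inl ⟨k, h, hvk⟩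
  · refine Or.inr ⟨k - r + 1, by omega, by omega, ?_⟩
    rw [hc, add_assoc, ← Nat.cast_add]
    have : r - 1 + (k - r + 1) = k := by omega
    rw [this, ← hvk]

end Windows

section MainCases

variable [NeZero n] (hn : 3 ≤ n)
include hn

lemma sum_head (x : Fin n) (k : ℕ) (D : Fin n → ℕ) :
    ∑ i ∈ range (k+1), D (x + (i : Fin n))
      = D x + ∑ i ∈ range k, D ((x + 1) + (i : Fin n)) := by
  rw [Finset.sum_range_succ']
  have h1 : ∀ i ∈ range k, D (x + ((i+1:ℕ) : Fin n)) = D ((x+1) + (i : Fin n)) := by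
    intro i _
    congr 1
    push_cast
    ring
  rw [Finset.sum_congr rfl h1]
  simp only [Nat.cast_zero, add_zero]
  exact Nat.add_comm _ _

lemma sum_tail (x : Fin n) (a k : ℕ) (D : Fin n → ℕ) :
    ∑ i ∈ Ico a (a+k), D (x + (i : Fin n))
      = ∑ i ∈ range k, D ((x + (a : Fin n)) + (i : Fin n)) := by
  rw [Finset.sum_Ico_eq_sum_range]
  have h0 : a + k - a = k := by omega
  rw [h0]
  refine Finset.sum_congr rfl fun i _ => ?_
  congr 1
  rw [add_assoc, ← Nat.cast_add]

lemma sum_shift' (y : Fin n) (D : Fin n → ℕ) :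
    ∑ z : Fin n, D (z + y) = ∑ v, D v :=
  Fintype.sum_equiv (Equiv.addRight y) _ _ (fun _ => rfl)

lemma case_i_odd (m : ℕ) (hm : n = 2*m+1) (hm1 : 1 ≤ m) (D : Fin n → ℕ)
    (hγ : ∑ v, D v = 2^(m+1) + 2^(m+1) - 3)
    (hW : ∀ z : Fin n, (∑ i ∈ range m, D (z + (i : Fin n))) ≤ 2^(m+1) - 2) :
    Coverable (cycleGraph n) D := by
  refine ⟨D, Relation.ReflTransGen.refl, fun v => ?_⟩
  have hTot : (∑ k ∈ range (m+1), D (v + (k : Fin n)))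
      + (∑ k ∈ Ico (m+1) n, D (v + (k : Fin n))) = ∑ u, D u := by
    rw [Finset.sum_range_add_sum_Ico _ (by omega : m+1 ≤ n)]
    exact sum_shift hn v D
  have hhead := sum_head hn v m D
  have hIco : Ico (m+1) n = Ico (m+1) ((m+1)+m) := by
    congr 1
    omega
  have htail : ∑ k ∈ Ico (m+1) n, D (v + (k : Fin n))
      = ∑ i ∈ range m, D ((v + ((m+1 : ℕ) : Fin n)) + (i : Fin n)) := by
    rw [hIco]
    exact sum_tail hn v (m+1) m D
  have hB1 := hW (v + 1)
  have hB2 := hW (v + ((m+1 : ℕ) : Fin n))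
  have h1 : (2:ℕ)^2 ≤ 2^(m+1) := Nat.pow_le_pow_right (by norm_num) (by omega)
  norm_num at h1
  omega

lemma case_i_even (m : ℕ) (hm : n = m + m) (hm2 : 2 ≤ m) (D : Fin n → ℕ)
    (hγ : ∑ v, D v = 2^m + 2^(m+1) - 3)
    (hW : ∀ z : Fin n, (∑ i ∈ range (m-1), D (z + (i : Fin n))) ≤ 2^m - 2) :
    Coverable (cycleGraph n) D := by
  classical
  -- every antipodal pair carries at least 2^m + 1 pebbles
  have hpair : ∀ x : Fin n, 2^m + 1 ≤ D x + D (x + ((m : ℕ) : Fin n)) := by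
    intro x
    have hTot : (∑ k ∈ range (m+1), D (x + (k : Fin n)))
        + (∑ k ∈ Ico (m+1) n, D (x + (k : Fin n))) = ∑ u, D u := by
      rw [Finset.sum_range_add_sum_Ico _ (by omega : m+1 ≤ n)]
      exact sum_shift hn x D
    have hsucc : ∑ k ∈ range (m+1), D (x + (k : Fin n))
        = (∑ k ∈ range m, D (x + (k : Fin n))) + D (x + ((m:ℕ) : Fin n)) :=
      Finset.sum_range_succ _ _
    have hrange : range m = range ((m-1)+1) := by congr 1; omega
    have hhead : ∑ k ∈ range m, D (x + (k : Fin n))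
        = D x + ∑ i ∈ range (m-1), D ((x + 1) + (i : Fin n)) := by
      rw [hrange]
      exact sum_head hn x (m-1) D
    have hIco : Ico (m+1) n = Ico (m+1) ((m+1)+(m-1)) := by congr 1; omega
    have htail : ∑ k ∈ Ico (m+1) n, D (x + (k : Fin n))
        = ∑ i ∈ range (m-1), D ((x + ((m+1 : ℕ) : Fin n)) + (i : Fin n)) := by
      rw [hIco]
      exact sum_tail hn x (m+1) (m-1) D
    have hB1 := hW (x + 1)
    have hB2 := hW (x + ((m+1 : ℕ) : Fin n))
    have h1 : (2:ℕ)^2 ≤ 2^m := Nat.pow_le_pow_right (by norm_num) (by omega)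
    norm_num at h1
    have h2 : (2:ℕ)^(m+1) = 2*2^m := by rw [pow_succ]; ring
    omega
  -- split `D` into antipodal pair pieces
  set f : ℕ → Fin n → ℕ := fun x v => if v.val = x ∨ v.val = x + m then D v else 0 with hf
  have hsumf : ∀ v, (∑ x ∈ range m, f x v) = D v := by
    intro v
    have hvn : v.val < n := v.isLt
    by_cases hvm : v.val < m
    · rw [Finset.sum_eq_single_of_mem v.val (mem_range.mpr hvm)]
      · exact if_pos (Or.inl rfl)
      · intro b _ hbne
        refine if_neg ?_
        rintro (h | h) <;> omega
    · rw [Finset.sum_eq_single_of_mem (v.val - m) (mem_range.mpr (by omega))]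
      · exact if_pos (Or.inr (by omega))
      · intro b hb hbne
        have hbm : b < m := mem_range.mp hb
        refine if_neg ?_
        rintro (h | h) <;> omega
  have hcovpair : ∀ x ∈ range m, CoversOn (cycleGraph n) (f x)
      (fun v => v = ((x:ℕ) : Fin n) ∨ v = ((x:ℕ) : Fin n) + ((m:ℕ) : Fin n)) := by
    intro x hx
    have hxm : x < m := mem_range.mp hx
    have haval : (((x:ℕ) : Fin n)).val = x := Fin.val_cast_of_lt (by omega)
    have hbval : (((x:ℕ) : Fin n) + ((m:ℕ) : Fin n)).val = x + m := by
      rw [← Nat.cast_add, Fin.val_cast_of_lt (by omega)]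
    have hfa : f x (((x:ℕ) : Fin n)) = D (((x:ℕ) : Fin n)) := if_pos (Or.inl haval)
    have hfb : f x (((x:ℕ) : Fin n) + ((m:ℕ) : Fin n))
        = D (((x:ℕ) : Fin n) + ((m:ℕ) : Fin n)) := if_pos (Or.inr (by rw [hbval]))
    have hpx := hpair (((x:ℕ) : Fin n))
    have hba : (((x:ℕ) : Fin n) + ((m:ℕ) : Fin n)) + ((m:ℕ) : Fin n) = ((x:ℕ) : Fin n) := by
      rw [add_assoc, ← Nat.cast_add]
      have hmm : ((m + m : ℕ) : Fin n) = 0 := by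
        rw [← hm]
        exact Fin.natCast_self n
      rw [hmm, add_zero]
    by_cases hDa : 1 ≤ D (((x:ℕ) : Fin n))
    · by_cases hDb : 1 ≤ D (((x:ℕ) : Fin n) + ((m:ℕ) : Fin n))
      · refine ⟨f x, Relation.ReflTransGen.refl, ?_⟩
        rintro v (rfl | rfl)
        · rw [hfa]; omega
        · rw [hfb]; omega
      · -- the antipode is empty, feed it from the base point
        obtain ⟨D', hr, hu, hv, hw⟩ := transport hn (((x:ℕ) : Fin n)) m 0 (by omega) (by omega)
          (f x) (by
            have h0 : ((0:ℕ) : Fin n) = 0 := Nat.cast_zero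
            rw [h0, add_zero, hfa]
            omega)
        have h0 : ((0:ℕ) : Fin n) = 0 := Nat.cast_zero
        have h0m : 0 + m = m := Nat.zero_add m
        rw [h0, add_zero] at hu
        rw [h0m] at hv hw
        refine ⟨D', hr, ?_⟩
        rintro v (rfl | rfl)
        · rw [hfa] at hu; omega
        · rw [hv, hfb]; omega
    · -- the base point is empty, feed it from the antipode
      obtain ⟨D', hr, hu, hv, hw⟩ := transport hn (((x:ℕ) : Fin n) + ((m:ℕ) : Fin n)) m 0
        (by omega) (by omega) (f x) (by
          have h0 : ((0:ℕ) : Fin n) = 0 := Nat.cast_zero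
          rw [h0, add_zero, hfb]
          omega)
      have h0 : ((0:ℕ) : Fin n) = 0 := Nat.cast_zero
      have h0m : 0 + m = m := Nat.zero_add m
      rw [h0, add_zero] at hu
      rw [h0m] at hv hw
      rw [hba] at hv
      refine ⟨D', hr, ?_⟩
      rintro v (rfl | rfl)
      · rw [hv, hfa]; omega
      · rw [hfb] at hu; omega
  have hall := coversOn_sum (range m) f _ hcovpair
  have heq : (fun v => ∑ x ∈ range m, f x v) = D := funext hsumf
  rw [heq] at hall
  apply coverable_of_coversOn
  refine coversOn_mono hall ?_
  intro v _
  have hvn : v.val < n := v.isLt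
  by_cases hvm : v.val < m
  · exact ⟨v.val, mem_range.mpr hvm, Or.inl (Fin.cast_val_eq_self v).symm⟩
  · refine ⟨v.val - m, mem_range.mpr (by omega), Or.inr ?_⟩
    rw [← Nat.cast_add]
    have : v.val - m + m = v.val := by omega
    rw [this, Fin.cast_val_eq_self]

lemma case_ii_even (m : ℕ) (hm : n = m + m) (hm2 : 2 ≤ m) (D : Fin n → ℕ)
    (hW : ∀ z : Fin n, 2^m ≤ ∑ i ∈ range (m-1), D (z + (i : Fin n))) :
    Coverable (cycleGraph n) D := by
  classical
  set p1 : Fin n → ℕ := fun v => if v.val < m then D v else 0 with hp1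
  set p2 : Fin n → ℕ := fun v => if v.val < m then 0 else D v with hp2
  have hsplit : ∀ v, p1 v + p2 v = D v := by
    intro v
    rw [hp1, hp2]
    simp only []
    split_ifs <;> omega
  have hval0 : ∀ i : ℕ, i < m → ((0 : Fin n) + (i : Fin n)).val = i := by
    intro i hi
    rw [zero_add, Fin.val_cast_of_lt (by omega)]
  have hvalm : ∀ i : ℕ, i < m → (((m:ℕ) : Fin n) + (i : Fin n)).val = m + i := by
    intro i hi
    rw [← Nat.cast_add, Fin.val_cast_of_lt (by omega)]
  have hsub : range (m-1) ⊆ range m := Finset.range_subset_range.mpr (by omega)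
  have hsum1 : 2^m ≤ (∑ i ∈ range m, p1 ((0 : Fin n) + (i : Fin n))) + 1 := by
    have hvv : ∀ i ∈ range m, p1 ((0 : Fin n) + (i : Fin n)) = D ((0 : Fin n) + (i : Fin n)) :=
      fun i hi => if_pos (by rw [hval0 i (mem_range.mp hi)]; exact mem_range.mp hi)
    rw [Finset.sum_congr rfl hvv]
    have := hW (0 : Fin n)
    have hle : ∑ i ∈ range (m-1), D ((0 : Fin n) + (i : Fin n))
        ≤ ∑ i ∈ range m, D ((0 : Fin n) + (i : Fin n)) :=
      Finset.sum_le_sum_of_subset hsub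
    omega
  have hsum2 : 2^m ≤ (∑ i ∈ range m, p2 (((m:ℕ) : Fin n) + (i : Fin n))) + 1 := by
    have hvv : ∀ i ∈ range m, p2 (((m:ℕ) : Fin n) + (i : Fin n))
        = D (((m:ℕ) : Fin n) + (i : Fin n)) :=
      fun i hi => if_neg (by rw [hvalm i (mem_range.mp hi)]; omega)
    rw [Finset.sum_congr rfl hvv]
    have := hW (((m:ℕ) : Fin n))
    have hle : ∑ i ∈ range (m-1), D (((m:ℕ) : Fin n) + (i : Fin n))
        ≤ ∑ i ∈ range m, D (((m:ℕ) : Fin n) + (i : Fin n)) :=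
      Finset.sum_le_sum_of_subset hsub
    omega
  obtain ⟨E1, hrE1, hcov1, -⟩ := arcCover hn (0 : Fin n) m (by omega) (by omega) p1 hsum1
  obtain ⟨E2, hrE2, hcov2, -⟩ := arcCover hn ((m:ℕ) : Fin n) m (by omega) (by omega) p2 hsum2
  have hC1 : CoversOn (cycleGraph n) p1 (fun v => ∃ i, i < m ∧ v = (0 : Fin n) + (i : Fin n)) :=
    ⟨E1, hrE1, by rintro v ⟨i, hi, rfl⟩; exact hcov1 i hi⟩
  have hC2 : CoversOn (cycleGraph n) p2
      (fun v => ∃ i, i < m ∧ v = ((m:ℕ) : Fin n) + (i : Fin n)) :=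
    ⟨E2, hrE2, by rintro v ⟨i, hi, rfl⟩; exact hcov2 i hi⟩
  have hcomb := coversOn_add hC1 hC2
  have heq : (fun v => p1 v + p2 v) = D := funext hsplit
  rw [heq] at hcomb
  apply coverable_of_coversOn
  refine coversOn_mono hcomb ?_
  intro v _
  have hvn : v.val < n := v.isLt
  by_cases hvm : v.val < m
  · refine Or.inl ⟨v.val, hvm, ?_⟩
    rw [zero_add, Fin.cast_val_eq_self]
  · refine Or.inr ⟨v.val - m, by omega, ?_⟩
    rw [← Nat.cast_add]
    have : m + (v.val - m) = v.val := by omega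
    rw [this, Fin.cast_val_eq_self]

lemma case_ii_odd (m : ℕ) (hm : n = 2*m+1) (hm1 : 1 ≤ m) (D : Fin n → ℕ)
    (hγ : ∑ v, D v = 2^(m+1) + 2^(m+1) - 3)
    (hW : ∀ z : Fin n, 2^(m+1) ≤ ∑ i ∈ range m, D (z + (i : Fin n))) : False := by
  have hswap : ∑ z : Fin n, (∑ i ∈ range m, D (z + (i : Fin n)))
      = m * (∑ v, D v) := by
    rw [Finset.sum_comm]
    have h1 : ∀ i ∈ range m, (∑ z : Fin n, D (z + (i : Fin n))) = ∑ v, D v :=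
      fun i _ => sum_shift' hn ((i : Fin n)) D
    rw [Finset.sum_congr rfl h1, Finset.sum_const, Finset.card_range, smul_eq_mul]
  have hlow : n * 2^(m+1) ≤ ∑ z : Fin n, (∑ i ∈ range m, D (z + (i : Fin n))) := by
    have := Finset.card_nsmul_le_sum Finset.univ
      (fun z : Fin n => ∑ i ∈ range m, D (z + (i : Fin n))) (2^(m+1)) (fun z _ => hW z)
    rwa [Finset.card_univ, Fintype.card_fin, smul_eq_mul] at this
  rw [hswap, hγ] at hlow
  have h1 : (2:ℕ) ≤ 2^(m+1) := by
    calc (2:ℕ) = 2^1 := by norm_num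
    _ ≤ 2^(m+1) := Nat.pow_le_pow_right (by norm_num) (by omega)
  -- (2m+1) * P ≤ m * (2P - 3) is impossible
  rw [hm] at hlow
  have h3 : (3:ℕ) ≤ 2^(m+1) + 2^(m+1) := by omega
  zify [h3] at hlow
  zify at h1
  nlinarith [hlow, h1, hm1]

lemma coverable_upper (D : Fin n → ℕ)
    (hsum : ∑ v, D v = 2 ^ ((n + 1) / 2) + 2 ^ (n - (n + 1) / 2 + 1) - 3) :
    Coverable (cycleGraph n) D := by
  set r := (n + 1) / 2 with hrdef
  have hr2 : 2 ≤ r := by omega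
  have hrn : r < n := by omega
  by_cases hA : ∃ z : Fin n, (∑ i ∈ range (r-1), D (z + (i : Fin n))) ≤ 2^r - 1
  · by_cases hB : ∃ z : Fin n, 2^r - 1 ≤ ∑ i ∈ range (r-1), D (z + (i : Fin n))
    · -- a cut exists
      obtain ⟨z0, h0⟩ := hA
      obtain ⟨z1, h1⟩ := hB
      have hsh : ∀ z : Fin n, (∑ i ∈ range (r-1), D ((z+1) + (i : Fin n)))
          ≤ (∑ i ∈ range (r-1), D (z + (i : Fin n))) + D (z + ((r-1 : ℕ) : Fin n)) := by
        intro z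
        have hA1 : ∑ i ∈ range ((r-1)+1), D (z + (i : Fin n))
            = (∑ i ∈ range (r-1), D (z + (i : Fin n))) + D (z + ((r-1 : ℕ) : Fin n)) :=
          Finset.sum_range_succ _ _
        have hB1 : ∑ i ∈ range ((r-1)+1), D (z + (i : Fin n))
            = D z + ∑ i ∈ range (r-1), D ((z+1) + (i : Fin n)) := sum_head hn z (r-1) D
        omega
      have he : z0 + (((z1 - z0).val : ℕ) : Fin n) = z1 := by
        rw [Fin.cast_val_eq_self, add_comm]
        exact sub_add_cancel z1 z0
      obtain ⟨j, hj1, hj2⟩ := find_cut hn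
        (fun z => ∑ i ∈ range (r-1), D (z + (i : Fin n)))
        (fun z => D (z + ((r-1 : ℕ) : Fin n))) (2^r - 1) hsh ((z1 - z0).val) z0 h0
        (show 2^r - 1 ≤ ∑ i ∈ range (r-1),
            D ((z0 + (((z1 - z0).val : ℕ) : Fin n)) + (i : Fin n)) by rw [he]; exact h1)
      exact cut_coverable hn r hr2 hrn D hsum j hj1 hj2
    · -- all windows are small
      push_neg at hB
      rcases Nat.even_or_odd n with ⟨m, hm⟩ | ⟨m, hm⟩
      · have hm2 : 2 ≤ m := by omega
        have hre : r = m := by omega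
        have hnr : n - r + 1 = m + 1 := by omega
        rw [hnr, hre] at hsum
        refine case_i_even hn m hm hm2 D hsum ?_
        intro z
        have hz := hB z
        rw [hre] at hz
        have h1 : (1:ℕ) ≤ 2^m := Nat.one_le_two_pow
        omega
      · have hm1 : 1 ≤ m := by omega
        have hro : r = m + 1 := by omega
        have hnr : n - r + 1 = m + 1 := by omega
        rw [hnr, hro] at hsum
        refine case_i_odd hn m hm hm1 D hsum ?_
        intro z
        have hz := hB z
        rw [hro] at hz
        simp only [Nat.add_sub_cancel] at hz
        have h1 : (1:ℕ) ≤ 2^(m+1) := Nat.one_le_two_pow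
        omega
  · -- all windows are large
    push_neg at hA
    rcases Nat.even_or_odd n with ⟨m, hm⟩ | ⟨m, hm⟩
    · have hm2 : 2 ≤ m := by omega
      have hre : r = m := by omega
      refine case_ii_even hn m hm hm2 D ?_
      intro z
      have hz := hA z
      rw [hre] at hz
      have h1 : (1:ℕ) ≤ 2^m := Nat.one_le_two_pow
      omega
    · have hm1 : 1 ≤ m := by omega
      have hro : r = m + 1 := by omega
      have hnr : n - r + 1 = m + 1 := by omega
      rw [hnr, hro] at hsum
      refine absurd trivial (fun _ => case_ii_odd hn m hm hm1 D hsum ?_)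
      intro z
      have hz := hA z
      rw [hro] at hz
      simp only [Nat.add_sub_cancel] at hz
      have h1 : (1:ℕ) ≤ 2^(m+1) := Nat.one_le_two_pow
      omega

end MainCases

section Lower

variable [NeZero n] (hn : 3 ≤ n)
include hn

lemma adj_val {u v : Fin n} (h : (cycleGraph n).Adj u v) :
    v.val = (u.val + 1) % n ∨ u.val = (v.val + 1) % n := by
  rw [cycleGraph_adj'] at h
  rcases h with h | h
  · right
    have h1 : u - v = 1 := Fin.val_injective (by rw [h, val_one_of hn])
    have h2 : u = v + 1 := by
      conv_lhs => rw [← sub_add_cancel u v]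
      rw [h1, add_comm]
    rw [h2, Fin.val_add, val_one_of hn]
  · left
    have h1 : v - u = 1 := Fin.val_injective (by rw [h, val_one_of hn])
    have h2 : v = u + 1 := by
      conv_lhs => rw [← sub_add_cancel v u]
      rw [h1, add_comm]
    rw [h2, Fin.val_add, val_one_of hn]

lemma wgt_step {u v : Fin n} (h : (cycleGraph n).Adj u v) :
    min v.val (n - v.val) ≤ min u.val (n - u.val) + 1 := by
  have hu : u.val < n := u.isLt
  have hv : v.val < n := v.isLt
  rcases adj_val hn h with h1 | h1
  · by_cases hc : u.val + 1 = n
    · rw [hc, Nat.mod_self] at h1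
      omega
    · rw [Nat.mod_eq_of_lt (by omega)] at h1
      omega
  · by_cases hc : v.val + 1 = n
    · rw [hc, Nat.mod_self] at h1
      omega
    · rw [Nat.mod_eq_of_lt (by omega)] at h1
      omega

lemma phi_step {A B : Fin n → ℕ} (h : PebblingStep (cycleGraph n) A B) :
    ∑ w, B w * 2^(min w.val (n - w.val)) ≤ ∑ w, A w * 2^(min w.val (n - w.val)) := by
  obtain ⟨u, v, hadj, h2, rfl⟩ := h
  have hne : v ≠ u := hadj.ne'
  have hv2 : v ∈ Finset.univ.erase u := Finset.mem_erase.mpr ⟨hne, Finset.mem_univ v⟩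
  have hrw : ∀ g : Fin n → ℕ, ∑ w, g w * 2^(min w.val (n - w.val)) =
      g u * 2^(min u.val (n - u.val)) + (g v * 2^(min v.val (n - v.val))
        + ∑ w ∈ (Finset.univ.erase u).erase v, g w * 2^(min w.val (n - w.val))) := by
    intro g
    rw [← Finset.add_sum_erase _ _ (Finset.mem_univ u), ← Finset.add_sum_erase _ _ hv2]
  rw [hrw, hrw]
  have hcongr : ∀ w ∈ (Finset.univ.erase u).erase v,
      (if w = u then A u - 2 else if w = v then A v + 1 else A w) * 2^(min w.val (n - w.val))
      = A w * 2^(min w.val (n - w.val)) := by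
    intro w hw
    obtain ⟨hw1, hw2, -⟩ := Finset.mem_erase.mp hw |>.imp id (fun h => Finset.mem_erase.mp h)
    rw [if_neg hw2, if_neg hw1]
  rw [Finset.sum_congr rfl hcongr]
  simp only [if_pos rfl, if_neg hne, if_true]
  have hP : 2^(min v.val (n - v.val)) ≤ 2 * 2^(min u.val (n - u.val)) := by
    have hws := wgt_step hn hadj
    calc 2^(min v.val (n - v.val)) ≤ 2^(min u.val (n - u.val) + 1) :=
          Nat.pow_le_pow_right (by norm_num) hws
    _ = 2 * 2^(min u.val (n - u.val)) := by rw [pow_succ]; ring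
  obtain ⟨k, hk⟩ : ∃ k, A u = k + 2 := ⟨A u - 2, by omega⟩
  rw [hk, Nat.add_sub_cancel, add_mul, add_mul, one_mul]
  omega

lemma phi_rtg {A B : Fin n → ℕ} (h : RTG (cycleGraph n) A B) :
    ∑ w, B w * 2^(min w.val (n - w.val)) ≤ ∑ w, A w * 2^(min w.val (n - w.val)) := by
  induction h with
  | refl => exact le_refl _
  | tail _ hstep ih => exact le_trans (phi_step hn hstep) ih


lemma sum_weights :
    ∑ v : Fin n, 2^(min v.val (n - v.val))
      = 2 ^ ((n + 1) / 2) + 2 ^ (n - (n + 1) / 2 + 1) - 3 := by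
  set r := (n+1)/2 with hrdef
  have hr1 : 1 ≤ r := by omega
  have hrn : r ≤ n := by omega
  have h0 : ∑ v : Fin n, 2^(min v.val (n - v.val))
      = ∑ t ∈ range n, 2^(min t (n - t)) :=
    Fin.sum_univ_eq_sum_range (fun t => 2^(min t (n - t))) n
  rw [h0, ← Finset.sum_range_add_sum_Ico _ hrn]
  have hhead : ∑ t ∈ range r, 2^(min t (n - t)) = ∑ t ∈ range r, 2^t := by
    refine Finset.sum_congr rfl fun t ht => ?_
    have htr : t < r := mem_range.mp ht
    have : min t (n - t) = t := by omega
    rw [this]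
  have htail : ∑ t ∈ Ico r n, 2^(min t (n - t)) = ∑ i ∈ range (n - r), 2^((n-r) - i) := by
    rw [Finset.sum_Ico_eq_sum_range]
    refine Finset.sum_congr rfl fun i hi => ?_
    have hin : i < n - r := mem_range.mp hi
    have h1 : min (r + i) (n - (r + i)) = n - (r + i) := by omega
    have h2 : n - (r + i) = (n - r) - i := by omega
    rw [h1, h2]
  rw [hhead, htail, sum_pow_asc r, sum_pow_desc (n - r)]
  have hp1 : (1:ℕ) ≤ 2^r := Nat.one_le_two_pow
  have hp2 : (2:ℕ) ≤ 2^(n-r+1) := by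
    calc (2:ℕ) = 2^1 := by norm_num
    _ ≤ 2^(n-r+1) := Nat.pow_le_pow_right (by norm_num) (by omega)
  have he : n - r + 1 = (n - r) + 1 := rfl
  omega

lemma stacked_not_coverable (N : ℕ)
    (hN : N < 2 ^ ((n + 1) / 2) + 2 ^ (n - (n + 1) / 2 + 1) - 3) :
    ¬ Coverable (cycleGraph n) (fun v => if v = 0 then N else 0) := by
  rintro ⟨D', hrtg, hcov⟩
  have hupper := phi_rtg hn hrtg
  have hstack : ∑ w : Fin n, (if w = 0 then N else 0) * 2^(min w.val (n - w.val)) = N := by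
    have hc : ∀ w : Fin n, (if w = 0 then N else 0) * 2^(min w.val (n - w.val))
        = if w = 0 then N * 2^(min (0:Fin n).val (n - (0:Fin n).val)) else 0 := by
      intro w
      split_ifs with hw
      · subst hw; rfl
      · exact zero_mul _
    rw [Finset.sum_congr rfl fun w _ => hc w, Finset.sum_ite_eq' Finset.univ (0 : Fin n)]
    have h1 : ((0 : Fin n)).val = 0 := Fin.val_zero n
    simp [h1]
  have hlow : ∑ v : Fin n, 2^(min v.val (n - v.val))
      ≤ ∑ w : Fin n, D' w * 2^(min w.val (n - w.val)) := by
    refine Finset.sum_le_sum fun w _ => ?_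
    have := hcov w
    calc 2^(min w.val (n - w.val)) = 1 * 2^(min w.val (n - w.val)) := (one_mul _).symm
    _ ≤ D' w * 2^(min w.val (n - w.val)) := Nat.mul_le_mul_right _ (hcov w)
  rw [hstack] at hupper
  rw [sum_weights hn] at hlow
  omega

end Lower

end CP

theorem cycle_cover_pebbling (n : ℕ) (hn : 3 ≤ n) :
    coverPebblingNumber (cycleGraph n) = 2 ^ ((n + 1) / 2) + 2 ^ (n - (n + 1) / 2 + 1) - 3 := by
  haveI : NeZero n := ⟨by omega⟩
  have hmem : (2 ^ ((n + 1) / 2) + 2 ^ (n - (n + 1) / 2 + 1) - 3)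
      ∈ {N | ∀ D : Fin n → ℕ, ∑ v, D v = N → Coverable (cycleGraph n) D} :=
    fun D hD => CP.coverable_upper hn D hD
  apply le_antisymm
  · exact Nat.sInf_le hmem
  · apply le_csInf ⟨_, hmem⟩
    intro N hN
    by_contra hlt
    push_neg at hlt
    have hsum : ∑ v : Fin n, (if v = (0 : Fin n) then N else 0) = N := by
      rw [Finset.sum_ite_eq' Finset.univ (0 : Fin n)]
      simp
    exact CP.stacked_not_coverable hn N hlt (hN _ hsum)
end

section
/- Let P_m be a path with vertices V_1,...,V_m (m ≥ 2), let Q and K be integers with Q > K and Q ≥ g, and let D be a g-colored distribution of exactly Q(m-1) + 2^{m-1}·Q pebbles on P_m such that each of V_2,...,V_m carries at least Q pebbles and V_1 carries exactly K pebbles. Then there is a sequence of color-respecting pebbling steps after which every vertex V_1,...,V_m carries at least Q pebbles. -/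
open SimpleGraph Finset

section Aux
variable {V C : Type*} [DecidableEq V] [DecidableEq C] [Fintype C] {G : SimpleGraph V}

lemma reach_move (u v : V) (huv : G.Adj u v) (c : C) (k : ℕ) :
    ∀ D : V → C → ℕ, 2 * k ≤ D u c →
    Relation.ReflTransGen (ColorStep G) D
      (fun w d => if w = u ∧ d = c then D u c - 2 * k
        else if w = v ∧ d = c then D v c + k else D w d) := by
  have hne : u ≠ v := huv.ne
  induction k with
  | zero =>
    intro D _
    have : (fun w d => if w = u ∧ d = c then D u c - 2 * 0
        else if w = v ∧ d = c then D v c + 0 else D w d) = D := by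
      funext w d
      by_cases h1 : w = u ∧ d = c
      · simp [h1, h1.1, h1.2]
      · by_cases h2 : w = v ∧ d = c
        · simp [h1, h2, h2.1, h2.2, Ne.symm hne]
        · simp [h1, h2]
    rw [this]
  | succ k ih =>
    intro D hk
    have h1 := ih D (by omega)
    refine Relation.ReflTransGen.tail h1 ?_
    refine ⟨u, v, c, huv, ?_, ?_⟩
    · simp; omega
    · funext w d
      by_cases h1 : w = u ∧ d = c
      · simp [h1, h1.1, h1.2, hne]
        omega
      · by_cases h2 : w = v ∧ d = c
        · simp [h1, h2, h2.1, h2.2, hne, Ne.symm hne]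
          omega
        · simp [h1, h2]

lemma reach_transfer_aux (u v : V) (huv : G.Adj u v) (k : C → ℕ) :
    ∀ s : Finset C, ∀ D : V → C → ℕ, (∀ c ∈ s, 2 * k c ≤ D u c) →
    Relation.ReflTransGen (ColorStep G) D
      (fun w d => if d ∈ s then (if w = u then D u d - 2 * k d
        else if w = v then D v d + k d else D w d) else D w d) := by
  have hne : u ≠ v := huv.ne
  intro s
  induction s using Finset.induction_on with
  | empty => intro D _; simp only [Finset.notMem_empty, if_false]; exact Relation.ReflTransGen.refl
  | @insert a s ha ih =>
    intro D hD
    have h1 := reach_move u v huv a (k a) D (hD a (mem_insert_self a s))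
    set D1 : V → C → ℕ := (fun w d => if w = u ∧ d = a then D u a - 2 * k a
        else if w = v ∧ d = a then D v a + k a else D w d) with hD1
    have h2 := ih D1 ?_
    · refine Relation.ReflTransGen.trans h1 ?_
      convert h2 using 1
      funext w d
      by_cases hda : d = a
      · subst hda
        simp only [ha, if_neg ha, mem_insert, true_or, if_pos, hD1]
        by_cases hw : w = u
        · simp [hw, hne]
        · by_cases hw2 : w = v
          · simp [hw, hw2, Ne.symm hne]
          · simp [hw, hw2]
      · by_cases hds : d ∈ s
        · have : d ∈ insert a s := mem_insert_of_mem hds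
          simp only [hds, if_pos, this, hD1]
          by_cases hw : w = u
          · simp [hw, hda]
          · by_cases hw2 : w = v
            · simp [hw, hw2, hda]
            · simp [hw, hw2, hda]
        · have : d ∉ insert a s := by simp [hda, hds]
          simp [hds, this, hD1, hda]
    · intro c hc
      have hca : c ≠ a := by rintro rfl; exact ha hc
      have : D1 u c = D u c := by simp [hD1, hca]
      rw [this]
      exact hD c (mem_insert_of_mem hc)

lemma reach_transfer (u v : V) (huv : G.Adj u v) (k : C → ℕ) (D : V → C → ℕ)
    (hD : ∀ c, 2 * k c ≤ D u c) :
    Relation.ReflTransGen (ColorStep G) D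
      (fun w d => if w = u then D u d - 2 * k d
        else if w = v then D v d + k d else D w d) := by
  have := reach_transfer_aux u v huv k Finset.univ D (fun c _ => hD c)
  simpa using this

lemma exists_caps (cap : C → ℕ) (M : ℕ) (h : M ≤ ∑ c, cap c) :
    ∃ k : C → ℕ, (∀ c, k c ≤ cap c) ∧ ∑ c, k c = M := by
  induction M with
  | zero => exact ⟨fun _ => 0, fun _ => Nat.zero_le _, by simp⟩
  | succ M ih =>
    obtain ⟨k, hk, hs⟩ := ih (by omega)
    have hex : ∃ c, k c < cap c := by
      by_contra hc
      push_neg at hc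
      have : ∑ c, cap c ≤ ∑ c, k c := Finset.sum_le_sum (fun c _ => hc c)
      omega
    obtain ⟨c, hc⟩ := hex
    refine ⟨Function.update k c (k c + 1), ?_, ?_⟩
    · intro d
      by_cases hd : d = c
      · subst hd; simp; omega
      · simp [Function.update, hd]; exact hk d
    · rw [Finset.sum_update_of_mem (Finset.mem_univ c)]
      have h2 := Finset.sum_eq_sum_sdiff_singleton_add (Finset.mem_univ c) k
      omega

end Aux

def vtx {m : ℕ} (hm : 0 < m) (t : ℕ) : Fin m := if h : t < m then ⟨t, h⟩ else ⟨0, hm⟩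

lemma vtx_val {m : ℕ} (hm : 0 < m) {t : ℕ} (h : t < m) : (vtx hm t).val = t := by
  simp [vtx, h]

lemma vtx_self {m : ℕ} (hm : 0 < m) (i : Fin m) : vtx hm i.val = i := by
  apply Fin.ext; simp [vtx, i.isLt]

lemma path_main (m g Q : ℕ) (hm : 2 ≤ m) (hm0 : 0 < m) (hgQ : g ≤ Q) :
    ∀ j, j ≤ m - 1 → ∀ D : Fin m → Fin g → ℕ,
    (∀ i : Fin m, 1 ≤ i.val → Q ≤ ∑ c, D i c) →
    Q ≤ (∑ c, D (vtx hm0 0) c) +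
      (∑ i ∈ Finset.range j, ((∑ c, D (vtx hm0 (i+1)) c) - Q) * 2^(j-1-i)) / 2^j →
    QCoverable (pathGraph m) Q D := by
  intro j
  induction j with
  | zero =>
    intro _ D h1 hinv
    simp only [Finset.range_zero, Finset.sum_empty, pow_zero, Nat.div_one, Nat.zero_div,
      add_zero] at hinv
    refine ⟨D, Relation.ReflTransGen.refl, fun i => ?_⟩
    by_cases hi : 1 ≤ i.val
    · exact h1 i hi
    · have hie : i = vtx hm0 0 := by apply Fin.ext; rw [vtx_val hm0 hm0]; omega
      rw [hie]; exact hinv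
  | succ j ih =>
    intro hj D h1 hinv
    set u : Fin m := vtx hm0 (j+1) with hu_def
    set v : Fin m := vtx hm0 j with hv_def
    have hu : u.val = j + 1 := vtx_val hm0 (by omega)
    have hv : v.val = j := vtx_val hm0 (by omega)
    have huv : (pathGraph m).Adj u v := pathGraph_adj.mpr (Or.inr (by omega))
    have hn : Q ≤ ∑ c, D u c := h1 u (by omega)
    set n : ℕ := ∑ c, D u c with hn_def
    set T : ℕ := ∑ c, D u c / 2 with hT_def
    have hT : n ≤ 2 * T + g := by
      calc n ≤ ∑ c, (2 * (D u c / 2) + 1) := Finset.sum_le_sum (fun c _ => by omega)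
        _ = 2 * T + g := by
          rw [Finset.sum_add_distrib, ← Finset.mul_sum, ← hT_def]
          simp
    set M : ℕ := (n - Q) / 2 with hM_def
    obtain ⟨k, hk, hksum⟩ := exists_caps (fun c => D u c / 2) M (by rw [← hT_def]; omega)
    have hk2 : ∀ c, 2 * k c ≤ D u c := fun c => by have := hk c; omega
    have hreach := reach_transfer u v huv k D hk2
    set D1 : Fin m → Fin g → ℕ := (fun w d => if w = u then D u d - 2 * k d
        else if w = v then D v d + k d else D w d) with hD1
    have hvu : v ≠ u := by
      intro h
      have := congrArg Fin.val h
      omega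
    have hSu : ∑ c, D1 u c = n - 2 * M := by
      have he : ∀ c, D1 u c = D u c - 2 * k c := fun c => by simp [hD1]
      rw [Finset.sum_congr rfl (fun c _ => he c),
        Finset.sum_tsub_distrib _ (fun c _ => hk2 c), ← Finset.mul_sum, hksum, ← hn_def]
    have hSv : ∑ c, D1 v c = (∑ c, D v c) + M := by
      have he : ∀ c, D1 v c = D v c + k c := fun c => by simp [hD1, hvu]
      rw [Finset.sum_congr rfl (fun c _ => he c), Finset.sum_add_distrib, hksum]
    have hSo : ∀ w, w ≠ u → w ≠ v → ∑ c, D1 w c = ∑ c, D w c := by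
      intro w hw1 hw2
      refine Finset.sum_congr rfl (fun c _ => ?_)
      simp [hD1, hw1, hw2]
    have h2M : 2 * M ≤ n - Q := by omega
    have hcov : QCoverable (pathGraph m) Q D1 := by
      refine ih (by omega) D1 ?_ ?_
      · intro i hi
        by_cases hiu : i = u
        · rw [hiu, hSu]; omega
        · by_cases hiv : i = v
          · rw [hiv, hSv]; have := h1 i hi; rw [hiv] at this; omega
          · rw [hSo i hiu hiv]; exact h1 i hi
      · -- invariant is preserved
        set E : ℕ := n - Q with hE
        set P : ℕ := ∑ i ∈ Finset.range j, ((∑ c, D (vtx hm0 (i+1)) c) - Q) * 2^(j-1-i)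
          with hP
        have hsum1 : (∑ i ∈ Finset.range (j+1),
            ((∑ c, D (vtx hm0 (i+1)) c) - Q) * 2^(j+1-1-i)) = P * 2 + E := by
          rw [Finset.sum_range_succ]
          have e1 : ∀ i ∈ Finset.range j,
              ((∑ c, D (vtx hm0 (i+1)) c) - Q) * 2^(j+1-1-i)
                = (((∑ c, D (vtx hm0 (i+1)) c) - Q) * 2^(j-1-i)) * 2 := by
            intro i hi
            rw [Finset.mem_range] at hi
            have e2 : j + 1 - 1 - i = (j - 1 - i) + 1 := by omega
            rw [e2, pow_succ]
            ring
          rw [Finset.sum_congr rfl e1, ← Finset.sum_mul, ← hP]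
          have e3 : j + 1 - 1 - j = 0 := by omega
          rw [e3, pow_zero, mul_one, ← hu_def, ← hn_def, ← hE]
        have hinv' : Q ≤ (∑ c, D (vtx hm0 0) c) + (P * 2 + E) / 2^(j+1) := by
          rw [← hsum1]; exact hinv
        have hdiv : (P * 2 + E) / 2^(j+1) = (P + M) / 2^j := by
          have e1 : (2:ℕ)^(j+1) = 2 * 2^j := by rw [pow_succ]; ring
          rw [e1, ← Nat.div_div_eq_div_mul]
          congr 1
          omega
        rw [hdiv] at hinv'
        rcases Nat.eq_zero_or_pos j with hj0 | hjpos
        · subst hj0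
          simp only [Finset.range_zero, Finset.sum_empty, pow_zero, Nat.div_one, Nat.zero_div,
            add_zero]
          have hv0 : vtx hm0 0 = v := by rw [hv_def]
          rw [hv0, hSv]
          simp only [Finset.range_zero, Finset.sum_empty, pow_zero, Nat.div_one] at hinv'
          rw [hv0] at hinv'
          have hP0 : P = 0 := by rw [hP]; simp
          omega
        · -- j ≥ 1
          have hv0u : vtx hm0 0 ≠ u := by
            intro h
            have := congrArg Fin.val h
            rw [vtx_val hm0 hm0] at this
            omega
          have hv0v : vtx hm0 0 ≠ v := by
            intro h
            have := congrArg Fin.val h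
            rw [vtx_val hm0 hm0] at this
            omega
          have hF0 : ∑ c, D1 (vtx hm0 0) c = ∑ c, D (vtx hm0 0) c := hSo _ hv0u hv0v
          have hQj : Q ≤ ∑ c, D v c := h1 v (by omega)
          have hsplit : ∀ G : ℕ → ℕ, ∑ i ∈ Finset.range j, G i
              = (∑ i ∈ Finset.range (j-1), G i) + G (j-1) := by
            intro G
            conv_lhs => rw [show j = (j-1)+1 by omega, Finset.sum_range_succ]
          have hsum2 : (∑ i ∈ Finset.range j,
              ((∑ c, D1 (vtx hm0 (i+1)) c) - Q) * 2^(j-1-i)) = P + M := by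
            rw [hsplit, hP, hsplit (fun i => ((∑ c, D (vtx hm0 (i+1)) c) - Q) * 2^(j-1-i))]
            have e1 : ∀ i ∈ Finset.range (j-1),
                ((∑ c, D1 (vtx hm0 (i+1)) c) - Q) * 2^(j-1-i)
                  = ((∑ c, D (vtx hm0 (i+1)) c) - Q) * 2^(j-1-i) := by
              intro i hi
              rw [Finset.mem_range] at hi
              have hne1 : vtx hm0 (i+1) ≠ u := by
                intro h
                have := congrArg Fin.val h
                rw [vtx_val hm0 (by omega)] at this
                omega
              have hne2 : vtx hm0 (i+1) ≠ v := by
                intro h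
                have := congrArg Fin.val h
                rw [vtx_val hm0 (by omega)] at this
                omega
              rw [hSo _ hne1 hne2]
            rw [Finset.sum_congr rfl e1]
            have e2 : vtx hm0 (j-1+1) = v := by rw [hv_def]; congr 1; omega
            rw [e2, hSv]
            have e3 : j - 1 - (j-1) = 0 := by omega
            rw [e3, pow_zero, mul_one, mul_one]
            omega
          rw [hF0, hsum2]
          exact hinv'
    obtain ⟨D2, hr2, hc2⟩ := hcov
    exact ⟨D2, hreach.trans hr2, hc2⟩


theorem path_cover_v1 (m g Q K : ℕ) (hm : 2 ≤ m) (hKQ : K < Q) (hgQ : g ≤ Q)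
    (D : Fin m → Fin g → ℕ)
    (htot : ∑ i, ∑ c, D i c = Q * (m - 1) + 2 ^ (m - 1) * Q)
    (hmid : ∀ i : Fin m, i ≠ ⟨0, by omega⟩ → Q ≤ ∑ c, D i c)
    (hfirst : ∑ c, D ⟨0, by omega⟩ c = K) :
    QCoverable (pathGraph m) Q D := by
  have hm0 : 0 < m := by omega
  have h1 : ∀ i : Fin m, 1 ≤ i.val → Q ≤ ∑ c, D i c := by
    intro i hi
    apply hmid
    intro h
    have h2 := congrArg Fin.val h
    simp only at h2
    omega
  apply path_main m g Q hm hm0 hgQ (m-1) le_rfl D h1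
  have hz : (vtx hm0 0 : Fin m) = ⟨0, by omega⟩ := by apply Fin.ext; rw [vtx_val hm0 hm0]
  have hF0 : ∑ c, D (vtx hm0 0) c = K := by rw [hz]; exact hfirst
  have htot' : ∑ i ∈ Finset.range m, (∑ c, D (vtx hm0 i) c) = Q * (m-1) + 2^(m-1) * Q := by
    rw [← htot, ← Fin.sum_univ_eq_sum_range (fun t => ∑ c, D (vtx hm0 t) c) m]
    exact Finset.sum_congr rfl (fun i _ => by rw [vtx_self hm0 i])
  have e := Finset.sum_range_succ' (fun t => ∑ c, D (vtx hm0 t) c) (m-1)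
  rw [show m - 1 + 1 = m from by omega] at e
  have e2 : ∑ i ∈ Finset.range m, (∑ c, D (vtx hm0 i) c)
      = (∑ i ∈ Finset.range (m-1), (∑ c, D (vtx hm0 (i+1)) c)) + K := by
    rw [← hF0]; exact e
  have hp : 0 < 2^(m-1) := Nat.pow_pos (by norm_num)
  have hq : Q ≤ 2^(m-1)*Q := Nat.le_mul_of_pos_left Q hp
  have hsum : ∑ i ∈ Finset.range (m-1), (∑ c, D (vtx hm0 (i+1)) c)
      = Q * (m-1) + 2^(m-1)*Q - K := by omega
  have hEtot : ∑ i ∈ Finset.range (m-1), ((∑ c, D (vtx hm0 (i+1)) c) - Q)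
      = 2^(m-1)*Q - K := by
    rw [Finset.sum_tsub_distrib _ (fun i hi => ?_)]
    · rw [Finset.sum_const, Finset.card_range, smul_eq_mul, hsum]
      have hcomm : Q * (m-1) = (m-1) * Q := Nat.mul_comm _ _
      omega
    · refine h1 (vtx hm0 (i+1)) ?_
      rw [Finset.mem_range] at hi
      rw [vtx_val hm0 (by omega)]
      omega
  have hN : ∑ i ∈ Finset.range (m-1), ((∑ c, D (vtx hm0 (i+1)) c) - Q)
      ≤ ∑ i ∈ Finset.range (m-1), ((∑ c, D (vtx hm0 (i+1)) c) - Q) * 2^(m-1-1-i) := by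
    refine Finset.sum_le_sum (fun i _ => ?_)
    exact Nat.le_mul_of_pos_right _ (Nat.pow_pos (by norm_num))
  set N : ℕ := ∑ i ∈ Finset.range (m-1), ((∑ c, D (vtx hm0 (i+1)) c) - Q) * 2^(m-1-1-i)
    with hNdef
  have hk2 : K ≤ 2^(m-1)*K := Nat.le_mul_of_pos_left K hp
  have hid : 2^(m-1)*(Q-K) + 2^(m-1)*K = 2^(m-1)*Q := by
    rw [← Nat.mul_add]
    congr 1
    omega
  have h3 : 2^(m-1)*(Q-K) ≤ N := by omega
  have h4 : Q - K ≤ N / 2^(m-1) := (Nat.le_div_iff_mul_le hp).mpr (by rw [mul_comm]; exact h3)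
  rw [hF0]
  omega
end

section
/- Let g and Q be positive integers with g < Q. Then every g-colored distribution of Q(2^n - 1) pebbles on the path P_n is Q-coverable: there is a sequence of color-respecting pebbling steps after which every vertex carries at least Q pebbles. -/
open SimpleGraph Finset

set_option linter.unusedSectionVars false

namespace PathCover

variable {V C : Type*} [DecidableEq V] [DecidableEq C]

/-- Move `k` pebbles of color `c` from `u` to adjacent `v`, consuming `2k` at `u`. -/
lemma transport {G : SimpleGraph V} {u v : V} (huv : G.Adj u v) (c : C) (k : ℕ) :
    ∀ D : V → C → ℕ, 2 * k ≤ D u c →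
    Relation.ReflTransGen (ColorStep G) D
      (fun w d => if w = u ∧ d = c then D u c - 2 * k
        else if w = v ∧ d = c then D v c + k else D w d) := by
  have hne : u ≠ v := G.ne_of_adj huv
  induction k with
  | zero =>
    intro D _
    have : (fun w d => if w = u ∧ d = c then D u c - 2 * 0
        else if w = v ∧ d = c then D v c + 0 else D w d) = D := by
      funext w d
      by_cases h1 : w = u ∧ d = c
      · rw [if_pos h1, h1.1, h1.2]; omega
      · by_cases h2 : w = v ∧ d = c
        · rw [if_neg h1, if_pos h2, h2.1, h2.2]; omega
        · rw [if_neg h1, if_neg h2]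
    rw [this]
  | succ k ih =>
    intro D hk
    have h2 : 2 ≤ D u c := by omega
    set E : V → C → ℕ := fun w d => if w = u ∧ d = c then D u c - 2
      else if w = v ∧ d = c then D v c + 1 else D w d with hE
    have hstep : ColorStep G D E := ⟨u, v, c, huv, h2, rfl⟩
    have hEu : E u c = D u c - 2 := by simp [hE]
    have hEv : E v c = D v c + 1 := by
      simp [hE, Ne.symm hne]
    have hk' : 2 * k ≤ E u c := by rw [hEu]; omega
    have hrest := ih E hk'
    have heq : (fun w d => if w = u ∧ d = c then E u c - 2 * k
        else if w = v ∧ d = c then E v c + k else E w d)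
        = (fun w d => if w = u ∧ d = c then D u c - 2 * (k+1)
          else if w = v ∧ d = c then D v c + (k+1) else D w d) := by
      funext w d
      by_cases h1 : w = u ∧ d = c
      · rw [if_pos h1, if_pos h1, hEu]; omega
      · by_cases h2' : w = v ∧ d = c
        · rw [if_neg h1, if_neg h1, if_pos h2', if_pos h2', hEv]; omega
        · rw [if_neg h1, if_neg h1, if_neg h2', if_neg h2', hE]
          simp only
          rw [if_neg h1, if_neg h2']
    exact Relation.ReflTransGen.head hstep (heq ▸ hrest)


/-- Move `s c` pebbles of each color `c ∈ t` from `u` to adjacent `v`. -/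
lemma multiTransport {G : SimpleGraph V} {u v : V} (huv : G.Adj u v) (s : C → ℕ)
    (t : Finset C) :
    ∀ D : V → C → ℕ, (∀ c ∈ t, 2 * s c ≤ D u c) →
    Relation.ReflTransGen (ColorStep G) D
      (fun w d => if w = u ∧ d ∈ t then D u d - 2 * s d
        else if w = v ∧ d ∈ t then D v d + s d else D w d) := by
  have hne : u ≠ v := G.ne_of_adj huv
  classical
  induction t using Finset.induction_on with
  | empty =>
    intro D _
    have : (fun w d => if w = u ∧ d ∈ (∅ : Finset C) then D u d - 2 * s d
        else if w = v ∧ d ∈ (∅ : Finset C) then D v d + s d else D w d) = D := by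
      funext w d; simp
    rw [this]
  | insert c t hc ih =>
    intro D hs
    have h1 : 2 * s c ≤ D u c := hs c (mem_insert_self c t)
    have step1 := transport huv c (s c) D h1
    set E : V → C → ℕ := fun w d => if w = u ∧ d = c then D u c - 2 * s c
      else if w = v ∧ d = c then D v c + s c else D w d with hE
    have hs' : ∀ c' ∈ t, 2 * s c' ≤ E u c' := by
      intro c' hc'
      have hcc : c' ≠ c := fun h => hc (h ▸ hc')
      simp only [hE]
      rw [if_neg (fun h => hcc h.2), if_neg (fun h => hne h.1)]
      exact hs c' (mem_insert_of_mem hc')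
    have step2 := ih E hs'
    have hEu : ∀ d', E u d' = if d' = c then D u c - 2 * s c else D u d' := by
      intro d'
      by_cases h : d' = c <;> simp [hE, h, hne]
    have hEv : ∀ d', E v d' = if d' = c then D v c + s c else D v d' := by
      intro d'
      by_cases h : d' = c <;> simp [hE, h, Ne.symm hne]
    have hEw : ∀ w d', w ≠ u → w ≠ v → E w d' = D w d' := by
      intro w d' h1 h2
      simp [hE, h1, h2]
    have heq : (fun w d => if w = u ∧ d ∈ t then E u d - 2 * s d
        else if w = v ∧ d ∈ t then E v d + s d else E w d)
        = (fun w d => if w = u ∧ d ∈ insert c t then D u d - 2 * s d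
          else if w = v ∧ d ∈ insert c t then D v d + s d else D w d) := by
      funext w d
      by_cases hw : w = u
      · have hwv : ¬ w = v := by rw [hw]; exact hne
        by_cases hdt : d ∈ t
        · have hdc : d ≠ c := fun h => hc (h ▸ hdt)
          simp [hw, hwv, hdt, hdc, mem_insert, hc, hne, Ne.symm hne, hEu]
        · by_cases hdc : d = c
          · simp [hw, hwv, hdt, hdc, mem_insert, hc, hne, Ne.symm hne, hEu]
          · simp [hw, hwv, hdt, hdc, mem_insert, hc, hne, Ne.symm hne, hEu]
      · by_cases hwv : w = v
        · by_cases hdt : d ∈ t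
          · have hdc : d ≠ c := fun h => hc (h ▸ hdt)
            simp [hw, hwv, hdt, hdc, mem_insert, hc, hne, Ne.symm hne, hEv]
          · by_cases hdc : d = c
            · simp [hw, hwv, hdt, hdc, mem_insert, hc, hne, Ne.symm hne, hEv]
            · simp [hw, hwv, hdt, hdc, mem_insert, hc, hne, Ne.symm hne, hEv]
        · simp [hw, hwv, mem_insert, hEw w d hw hwv]
    exact step1.trans (heq ▸ step2)


lemma allocAux (b : C → ℕ) :
    ∀ t : Finset C, ∀ m : ℕ, m ≤ ∑ c ∈ t, b c →
    ∃ y : C → ℕ, (∀ c, y c ≤ b c) ∧ (∀ c, c ∉ t → y c = 0) ∧ ∑ c ∈ t, y c = m := by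
  intro t
  induction t using Finset.induction_on with
  | empty =>
    intro m hm
    simp only [Finset.sum_empty, Nat.le_zero] at hm
    exact ⟨fun _ => 0, fun _ => Nat.zero_le _, fun _ _ => rfl, by simp [hm]⟩
  | insert c t hc ih =>
    intro m hm
    rw [Finset.sum_insert hc] at hm
    obtain ⟨y, hy1, hy2, hy3⟩ := ih (m - min (b c) m) (by omega)
    refine ⟨fun d => if d = c then min (b c) m else y d, ?_, ?_, ?_⟩
    · intro d
      by_cases h : d = c
      · simp [h]
      · simpa [h] using hy1 d
    · intro d hd
      have h1 : d ≠ c := fun h => hd (h ▸ mem_insert_self c t)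
      have h2 : d ∉ t := fun h => hd (mem_insert_of_mem h)
      simp [h1, hy2 d h2]
    · rw [Finset.sum_insert hc, if_pos rfl]
      have he : ∑ d ∈ t, (if d = c then min (b c) m else y d) = ∑ d ∈ t, y d :=
        Finset.sum_congr rfl (fun d hd => by rw [if_neg (show ¬d = c by rintro rfl; exact hc hd)])
      rw [he, hy3]
      omega

lemma odd_card_le_sum (a : C → ℕ) (t : Finset C) :
    (t.filter (fun c => a c % 2 = 1)).card ≤ ∑ c ∈ t, a c := by
  calc (t.filter (fun c => a c % 2 = 1)).card
      = ∑ _c ∈ t.filter (fun c => a c % 2 = 1), 1 := by rw [Finset.card_eq_sum_ones]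
    _ ≤ ∑ c ∈ t.filter (fun c => a c % 2 = 1), a c := Finset.sum_le_sum (fun c hc => by
        have := (Finset.mem_filter.mp hc).2; omega)
    _ ≤ ∑ c ∈ t, a c := Finset.sum_le_sum_of_subset (Finset.filter_subset _ _)

lemma evenKeeps (a : C → ℕ) :
    ∀ t : Finset C, ∀ Q j : ℕ,
    (t.filter (fun c => a c % 2 = 1)).card ≤ Q →
    ∑ c ∈ t, a c = Q + 2 * j →
    ∃ k : C → ℕ, (∀ c, c ∉ t → k c = 0) ∧ ∑ c ∈ t, k c = Q ∧
      ∀ c ∈ t, ∃ i, a c = k c + 2 * i := by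
  intro t
  induction t using Finset.induction_on with
  | empty =>
    intro Q j _ h2
    simp only [Finset.sum_empty] at h2
    exact ⟨fun _ => 0, fun _ _ => rfl, by simp; omega, by simp⟩
  | insert c t hc ih =>
    intro Q j hodd hsum
    rw [Finset.sum_insert hc] at hsum
    have hfins : (Finset.filter (fun c => a c % 2 = 1) (insert c t)).card
        = (if a c % 2 = 1 then 1 else 0) + (t.filter (fun c => a c % 2 = 1)).card := by
      rw [Finset.filter_insert]
      split_ifs with h
      · rw [Finset.card_insert_of_notMem (fun hx => hc (Finset.mem_filter.mp hx).1)]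
        omega
      · omega
    rw [hfins] at hodd
    have ho' := odd_card_le_sum a t
    by_cases hcase : ∑ c ∈ t, a c ≤ Q
    · -- keep Q - A' of color c
      have hk0le : Q - (∑ c ∈ t, a c) ≤ a c := by omega
      obtain ⟨k, hk0, hk1, hk2⟩ := ih (∑ c ∈ t, a c) 0 ho' (by omega)
      refine ⟨fun d => if d = c then Q - (∑ c ∈ t, a c) else k d, ?_, ?_, ?_⟩
      · intro d hd
        have h1 : d ≠ c := fun h => hd (h ▸ mem_insert_self c t)
        have h2 : d ∉ t := fun h => hd (mem_insert_of_mem h)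
        simp [h1, hk0 d h2]
      · rw [Finset.sum_insert hc, if_pos rfl]
        have he : ∑ d ∈ t, (if d = c then Q - (∑ c ∈ t, a c) else k d) = ∑ d ∈ t, k d :=
          Finset.sum_congr rfl (fun d hd => by rw [if_neg (show ¬d = c by rintro rfl; exact hc hd)])
        rw [he, hk1]
        omega
      · intro d hd
        rcases Finset.mem_insert.mp hd with h | h
        · subst h
          exact ⟨(a d - (Q - (∑ c ∈ t, a c))) / 2, by simp; omega⟩
        · obtain ⟨i, hi⟩ := hk2 d h
          have hne : d ≠ c := by rintro rfl; exact hc h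
          exact ⟨i, by simp only [if_neg hne]; exact hi⟩
    · -- keep a c % 2 of color c
      have hk0 : a c % 2 ≤ Q := by
        by_cases h : a c % 2 = 1
        · rw [if_pos h] at hodd; omega
        · omega
      obtain ⟨k, hh0, hh1, hh2⟩ := ih (Q - a c % 2) (j - a c / 2) (by
          by_cases h : a c % 2 = 1
          · rw [if_pos h] at hodd; omega
          · rw [if_neg h] at hodd; omega) (by omega)
      refine ⟨fun d => if d = c then a c % 2 else k d, ?_, ?_, ?_⟩
      · intro d hd
        have h1 : d ≠ c := fun h => hd (h ▸ mem_insert_self c t)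
        have h2 : d ∉ t := fun h => hd (mem_insert_of_mem h)
        simp [h1, hh0 d h2]
      · rw [Finset.sum_insert hc, if_pos rfl]
        have he : ∑ d ∈ t, (if d = c then a c % 2 else k d) = ∑ d ∈ t, k d :=
          Finset.sum_congr rfl (fun d hd => by rw [if_neg (show ¬d = c by rintro rfl; exact hc hd)])
        rw [he, hh1]
        omega
      · intro d hd
        rcases Finset.mem_insert.mp hd with h | h
        · subst h
          exact ⟨a d / 2, by simp; omega⟩
        · obtain ⟨i, hi⟩ := hh2 d h
          have hne : d ≠ c := by rintro rfl; exact hc h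
          exact ⟨i, by simp only [if_neg hne]; exact hi⟩

/-- Parity-smart keeps: keep exactly `Q` pebbles, send `⌊(A-Q)/2⌋` in total. -/
lemma keeps [Fintype C] (a : C → ℕ) (Q : ℕ) (hcard : Fintype.card C < Q)
    (hQ : Q ≤ ∑ c, a c) :
    ∃ k s : C → ℕ, (∀ c, k c + 2 * s c ≤ a c) ∧ ∑ c, k c = Q ∧
      ∑ c, s c = (∑ c, a c - Q) / 2 := by
  have hocard : (Finset.univ.filter (fun c => a c % 2 = 1)).card ≤ Fintype.card C := by
    simpa using Finset.card_filter_le Finset.univ (fun c => a c % 2 = 1)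
  by_cases hr : (∑ c, a c - Q) % 2 = 0
  · obtain ⟨k, _, hk1, hk2⟩ := evenKeeps a Finset.univ Q ((∑ c, a c - Q)/2)
      (by omega) (by omega)
    choose i hi using fun c => hk2 c (Finset.mem_univ c)
    refine ⟨k, i, fun c => by have := hi c; omega, hk1, ?_⟩
    have hsum : ∑ c, a c = ∑ c, (k c + 2 * i c) := Finset.sum_congr rfl (fun c _ => hi c)
    rw [Finset.sum_add_distrib, ← Finset.mul_sum] at hsum
    omega
  · have hlt : Q < ∑ c, a c := by omega
    obtain ⟨k, _, hk1, hk2⟩ := evenKeeps a Finset.univ (Q+1) ((∑ c, a c - (Q+1))/2)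
      (by omega) (by omega)
    choose i hi using fun c => hk2 c (Finset.mem_univ c)
    have hsum : ∑ c, a c = ∑ c, (k c + 2 * i c) := Finset.sum_congr rfl (fun c _ => hi c)
    rw [Finset.sum_add_distrib, ← Finset.mul_sum] at hsum
    have hex : ∃ c₀, 1 ≤ k c₀ := by
      by_contra h
      push_neg at h
      have : ∑ c, k c = 0 := Finset.sum_eq_zero (fun c _ => by have := h c; omega)
      omega
    obtain ⟨c₀, hc₀⟩ := hex
    refine ⟨fun c => if c = c₀ then k c₀ - 1 else k c, i, ?_, ?_, ?_⟩
    · intro c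
      show (if c = c₀ then k c₀ - 1 else k c) + 2 * i c ≤ a c
      by_cases h : c = c₀
      · subst h; rw [if_pos rfl]; have := hi c; omega
      · rw [if_neg h]; have := hi c; omega
    · show ∑ c, (if c = c₀ then k c₀ - 1 else k c) = Q
      have h2 : ∑ c, (if c = c₀ then k c₀ - 1 else k c)
          = (k c₀ - 1) + ∑ c ∈ Finset.univ.erase c₀, k c := by
        rw [← Finset.add_sum_erase Finset.univ _ (Finset.mem_univ c₀), if_pos rfl]
        congr 1
        exact Finset.sum_congr rfl (fun c hc => by rw [if_neg (Finset.ne_of_mem_erase hc)])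
      have h3 : k c₀ + ∑ c ∈ Finset.univ.erase c₀, k c = ∑ c, k c :=
        Finset.add_sum_erase Finset.univ k (Finset.mem_univ c₀)
      omega
    · omega



lemma multiTransport' [Fintype C] {G : SimpleGraph V} {u v : V} (huv : G.Adj u v)
    (s : C → ℕ) (D : V → C → ℕ) (hs : ∀ c, 2 * s c ≤ D u c) :
    Relation.ReflTransGen (ColorStep G) D
      (fun w d => if w = u then D u d - 2 * s d
        else if w = v then D v d + s d else D w d) := by
  have h := multiTransport huv s Finset.univ D (fun c _ => hs c)
  have he : (fun w d => if w = u ∧ d ∈ Finset.univ then D u d - 2 * s d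
      else if w = v ∧ d ∈ Finset.univ then D v d + s d else D w d)
      = (fun w d => if w = u then D u d - 2 * s d
        else if w = v then D v d + s d else D w d) := by
    funext w d
    simp
  rwa [he] at h

lemma mul_pred_pow (Q m : ℕ) : Q * (2 ^ m - 1) + Q = Q * 2 ^ m := by
  have h : 1 ≤ 2 ^ m := Nat.one_le_two_pow
  obtain ⟨t, ht⟩ := Nat.exists_eq_add_of_le h
  rw [ht]
  have e : 1 + t - 1 = t := by omega
  rw [e]
  ring

/-- The conclusion of the main lemma. -/
abbrev Concl [Fintype C] (G : SimpleGraph V) (Q L : ℕ) (p : ℕ → V) (D : V → C → ℕ) : Prop :=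
  ∃ D', Relation.ReflTransGen (ColorStep G) D D' ∧
    (∀ i, i < L → Q ≤ ∑ c, D' (p i) c) ∧
    (∀ v, (∀ i, i < L → v ≠ p i) → D' v = D v)


lemma peel [Fintype C] {G : SimpleGraph V} {Q : ℕ} (hcard : Fintype.card C < Q)
    {L : ℕ} (hL : 2 ≤ L)
    (IH : ∀ L', L' < L → ∀ (p : ℕ → V) (D : V → C → ℕ),
      (∀ i, i + 1 < L' → G.Adj (p i) (p (i+1))) →
      (∀ i, i < L' → ∀ j, j < L' → p i = p j → i = j) →
      Q * (2 ^ L' - 1) ≤ ∑ i ∈ Finset.range L', ∑ c, D (p i) c →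
      Concl G Q L' p D)
    (p : ℕ → V) (D : V → C → ℕ)
    (hadj : ∀ i, i + 1 < L → G.Adj (p i) (p (i+1)))
    (hinj : ∀ i, i < L → ∀ j, j < L → p i = p j → i = j)
    (hbud : Q * (2 ^ L - 1) ≤ ∑ i ∈ Finset.range L, ∑ c, D (p i) c)
    (hA : Q ≤ ∑ c, D (p 0) c) :
    Concl G Q L p D := by
  obtain ⟨k, s, hks, hkQ, hsS⟩ := keeps (D (p 0)) Q hcard hA
  have huv : G.Adj (p 0) (p 1) := hadj 0 (by omega)
  have hp01 : p 0 ≠ p 1 := by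
    intro h
    have := hinj 0 (by omega) 1 (by omega) h
    omega
  set D1 : V → C → ℕ := fun w d => if w = p 0 then D (p 0) d - 2 * s d
      else if w = p 1 then D (p 1) d + s d else D w d with hD1
  have htrans : Relation.ReflTransGen (ColorStep G) D D1 :=
    multiTransport' huv s D (fun c => by have := hks c; omega)
  have hD1p0 : ∀ d, D1 (p 0) d = D (p 0) d - 2 * s d := fun d => by simp [hD1]
  have hD1p1 : ∀ d, D1 (p 1) d = D (p 1) d + s d := fun d => by
    simp [hD1, Ne.symm hp01]
  have hD1other : ∀ v, v ≠ p 0 → v ≠ p 1 → D1 v = D v := by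
    intro v h0 h1
    funext d
    simp [hD1, h0, h1]
  have hsplit : ∑ i ∈ Finset.range L, ∑ c, D (p i) c
      = (∑ i ∈ Finset.range (L-1), ∑ c, D (p (i+1)) c) + ∑ c, D (p 0) c := by
    have e : L = (L - 1) + 1 := by omega
    conv_lhs => rw [e]
    exact Finset.sum_range_succ' _ _
  have hterm : ∀ i ∈ Finset.range (L - 1), ∑ c, D1 (p (i+1)) c
      = (∑ c, D (p (i+1)) c) + (if i = 0 then ∑ c, s c else 0) := by
    intro i hi
    rcases Nat.eq_zero_or_pos i with h0 | h0
    · subst h0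
      have e1 : (0:ℕ) + 1 = 1 := rfl
      rw [e1, if_pos rfl, Finset.sum_congr rfl (fun c _ => hD1p1 c), Finset.sum_add_distrib]
    · have hiL : i + 1 < L := by
        have := Finset.mem_range.mp hi; omega
      have hne0 : p (i+1) ≠ p 0 := by
        intro h
        have := hinj (i+1) (by omega) 0 (by omega) h
        omega
      have hne1 : p (i+1) ≠ p 1 := by
        intro h
        have := hinj (i+1) (by omega) 1 (by omega) h
        omega
      rw [hD1other _ hne0 hne1, if_neg (by omega)]
      omega
  have hsub : ∑ i ∈ Finset.range (L-1), ∑ c, D1 (p (i+1)) c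
      = (∑ i ∈ Finset.range (L-1), ∑ c, D (p (i+1)) c) + ∑ c, s c := by
    rw [Finset.sum_congr rfl hterm, Finset.sum_add_distrib]
    congr 1
    rw [Finset.sum_ite_eq' (Finset.range (L-1)) 0 (fun _ => ∑ c, s c)]
    rw [if_pos (Finset.mem_range.mpr (by omega))]
  have hkey : Q * (2^(L-1) - 1) ≤ ∑ i ∈ Finset.range (L-1), ∑ c, D1 (p (i+1)) c := by
    have h1 := mul_pred_pow Q L
    have h2 := mul_pred_pow Q (L-1)
    have h3 : Q * 2^L = 2 * (Q * 2^(L-1)) := by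
      have e : L = (L-1) + 1 := by omega
      conv_lhs => rw [e]
      rw [pow_succ]
      ring
    rw [hsub]
    omega
  obtain ⟨D2, hrtg2, hcov2, hout2⟩ := IH (L-1) (by omega) (fun i => p (i+1)) D1
    (fun i hi => hadj (i+1) (by omega))
    (fun i hi j hj h => by
      have := hinj (i+1) (by omega) (j+1) (by omega) h
      omega)
    hkey
  refine ⟨D2, Relation.ReflTransGen.trans htrans hrtg2, ?_, ?_⟩
  · intro i hi
    rcases Nat.eq_zero_or_pos i with h0 | h0
    · subst h0
      have hsame : D2 (p 0) = D1 (p 0) := hout2 (p 0) (fun j hj => by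
        intro h
        have := hinj 0 (by omega) (j+1) (by omega) h
        omega)
      rw [hsame]
      calc Q = ∑ c, k c := hkQ.symm
        _ ≤ ∑ c, D1 (p 0) c := Finset.sum_le_sum (fun c _ => by
            rw [hD1p0]; have := hks c; omega)
    · have hc : Q ≤ ∑ c, D2 (p (i-1+1)) c := hcov2 (i-1) (by omega)
      have e : i - 1 + 1 = i := by omega
      rwa [e] at hc
  · intro v hv
    have h2 : D2 v = D1 v := hout2 v (fun j hj => hv (j+1) (by omega))
    rw [h2, hD1other v (hv 0 (by omega)) (hv 1 (by omega))]



lemma main [Fintype C] (G : SimpleGraph V) (Q : ℕ) (hcard : Fintype.card C < Q) :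
    ∀ L : ℕ, ∀ p : ℕ → V, ∀ D : V → C → ℕ,
    (∀ i, i + 1 < L → G.Adj (p i) (p (i+1))) →
    (∀ i, i < L → ∀ j, j < L → p i = p j → i = j) →
    Q * (2 ^ L - 1) ≤ ∑ i ∈ Finset.range L, ∑ c, D (p i) c →
    Concl G Q L p D := by
  intro L
  induction L using Nat.strong_induction_on with
  | _ L IH =>
  intro p D hadj hinj hbud
  rcases Nat.lt_or_ge L 2 with hL2 | hL2
  · -- L = 0 or L = 1 : no moves needed
    refine ⟨D, Relation.ReflTransGen.refl, ?_, fun v _ => rfl⟩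
    intro i hi
    obtain ⟨rfl, hL1⟩ : i = 0 ∧ L = 1 := by omega
    rw [hL1] at hbud
    rw [Finset.sum_range_one] at hbud
    simpa using hbud
  · by_cases hA0 : Q ≤ ∑ c, D (p 0) c
    · exact peel hcard hL2 (fun L' hL' => IH L' hL') p D hadj hinj hbud hA0
    · by_cases hA1 : Q ≤ ∑ c, D (p (L-1)) c
      · -- peel from the right end, by reversing the path
        have hadj' : ∀ i, i + 1 < L → G.Adj (p (L-1-i)) (p (L-1-(i+1))) := by
          intro i hi
          have h := hadj (L-2-i) (by omega)
          have e1 : L-2-i+1 = L-1-i := by omega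
          rw [e1] at h
          have e2 : L-1-(i+1) = L-2-i := by omega
          rw [e2]
          exact h.symm
        obtain ⟨D', h1, h2, h3⟩ := peel hcard hL2 (fun L' hL' => IH L' hL')
          (fun i => p (L-1-i)) D hadj'
          (fun i hi j hj h => by
            have := hinj (L-1-i) (by omega) (L-1-j) (by omega) h
            omega)
          (by rw [Finset.sum_range_reflect (fun i => ∑ c, D (p i) c) L]; exact hbud)
          hA1
        refine ⟨D', h1, ?_, ?_⟩
        · intro i hi
          have hc : Q ≤ ∑ c, D' (p (L-1-(L-1-i))) c := h2 (L-1-i) (by omega)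
          have e : L-1-(L-1-i) = i := by omega
          rwa [e] at hc
        · intro v hv
          exact h3 v (fun i hi => hv (L-1-i) (by omega))
      · -- both ends are poor: split at a minimal rich prefix
        push_neg at hA0 hA1
        have hsplitT : ∑ i ∈ Finset.range L, ∑ c, D (p i) c
            = (∑ i ∈ Finset.range (L-1), ∑ c, D (p i) c) + ∑ c, D (p (L-1)) c := by
          have e : L = (L-1) + 1 := by omega
          conv_lhs => rw [e]
          exact Finset.sum_range_succ _ _
        have hex : ∃ m, m < L - 1 ∧
            Q * (2^(m+1) - 1) ≤ ∑ i ∈ Finset.range (m+1), ∑ c, D (p i) c := by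
          refine ⟨L-2, by omega, ?_⟩
          have e : L - 2 + 1 = L - 1 := by omega
          rw [e]
          have h1 := mul_pred_pow Q L
          have h2 := mul_pred_pow Q (L-1)
          have h3 : Q * 2^L = 2 * (Q * 2^(L-1)) := by
            have e2 : L = (L-1) + 1 := by omega
            conv_lhs => rw [e2]
            rw [pow_succ]
            ring
          omega
        have hspec := Nat.find_spec hex
        have hminspec := fun j (hj : j < Nat.find hex) => Nat.find_min hex hj
        set m := Nat.find hex with hm
        obtain ⟨hkL, hkbud⟩ := hspec
        have hmin : ∀ j, j < m →
            ¬ Q * (2^(j+1) - 1) ≤ ∑ i ∈ Finset.range (j+1), ∑ c, D (p i) c := by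
          intro j hj hbad
          exact hminspec j hj ⟨by omega, hbad⟩
        have hm1 : 1 ≤ m := by
          by_contra h
          push_neg at h
          have h0 : m = 0 := by omega
          rw [h0] at hkbud
          rw [Finset.sum_range_one] at hkbud
          simp at hkbud
          omega
        have hPk1 : ∑ i ∈ Finset.range m, ∑ c, D (p i) c < Q * (2^m - 1) := by
          have h := hmin (m-1) (by omega)
          have e : m - 1 + 1 = m := by omega
          rw [e] at h
          omega
        have hPkdef : ∑ i ∈ Finset.range (m+1), ∑ c, D (p i) c
            = (∑ i ∈ Finset.range m, ∑ c, D (p i) c) + ∑ c, D (p m) c :=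
          Finset.sum_range_succ _ _
        -- allocate the export
        have hQ2m : Q ≤ Q * 2^m := by
          calc Q = Q * 1 := (mul_one Q).symm
            _ ≤ Q * 2^m := Nat.mul_le_mul_left Q Nat.one_le_two_pow
        have hbc : (∑ i ∈ Finset.range (m+1), ∑ c, D (p i) c - Q * (2^(m+1) - 1)) / 2
            ≤ ∑ c, (D (p m) c / 2) := by
          have hsum2 : ∑ c, D (p m) c ≤ 2 * (∑ c, (D (p m) c)/2) + Fintype.card C := by
            calc ∑ c, D (p m) c ≤ ∑ c, (2 * (D (p m) c / 2) + 1) :=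
                  Finset.sum_le_sum (fun c _ => by omega)
              _ = 2 * (∑ c, (D (p m) c)/2) + Fintype.card C := by
                  rw [Finset.sum_add_distrib, ← Finset.mul_sum]
                  simp
          have h1 := mul_pred_pow Q (m+1)
          have h2 := mul_pred_pow Q m
          have h3 : Q * 2^(m+1) = 2 * (Q * 2^m) := by
            rw [pow_succ]
            ring
          omega
        obtain ⟨y, hy1, _, hy3⟩ := allocAux (fun c => D (p m) c / 2) Finset.univ _ hbc
        have hadjm : G.Adj (p m) (p (m+1)) := hadj m (by omega)
        have hpm : p m ≠ p (m+1) := by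
          intro h
          have := hinj m (by omega) (m+1) (by omega) h
          omega
        set D1 : V → C → ℕ := fun w d => if w = p m then D (p m) d - 2 * y d
            else if w = p (m+1) then D (p (m+1)) d + y d else D w d with hD1
        have htrans : Relation.ReflTransGen (ColorStep G) D D1 :=
          multiTransport' hadjm y D (fun c => by have := hy1 c; omega)
        have hD1pm : ∀ d, D1 (p m) d = D (p m) d - 2 * y d := fun d => by simp [hD1]
        have hD1pm1 : ∀ d, D1 (p (m+1)) d = D (p (m+1)) d + y d := fun d => by
          simp [hD1, Ne.symm hpm]
        have hD1other : ∀ v, v ≠ p m → v ≠ p (m+1) → D1 v = D v := by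
          intro v h0 h1
          funext d
          simp [hD1, h0, h1]
        have hprefeq : (∑ i ∈ Finset.range (m+1), ∑ c, D1 (p i) c) + 2 * (∑ c, y c)
            = ∑ i ∈ Finset.range (m+1), ∑ c, D (p i) c := by
          rw [Finset.sum_range_succ, Finset.sum_range_succ]
          have hrest : ∑ i ∈ Finset.range m, ∑ c, D1 (p i) c
              = ∑ i ∈ Finset.range m, ∑ c, D (p i) c := by
            refine Finset.sum_congr rfl (fun i hi => ?_)
            have hi' := Finset.mem_range.mp hi
            have hne0 : p i ≠ p m := fun h => by
              have := hinj i (by omega) m (by omega) h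
              omega
            have hne1 : p i ≠ p (m+1) := fun h => by
              have := hinj i (by omega) (m+1) (by omega) h
              omega
            rw [hD1other _ hne0 hne1]
          have hlast : (∑ c, D1 (p m) c) + 2 * (∑ c, y c) = ∑ c, D (p m) c := by
            rw [Finset.sum_congr rfl (fun c (_ : c ∈ Finset.univ) => hD1pm c),
              Finset.mul_sum, ← Finset.sum_add_distrib]
            refine Finset.sum_congr rfl (fun c _ => ?_)
            have := hy1 c
            omega
          rw [hrest]
          omega
        obtain ⟨D2, hrtg2, hcov2, hout2⟩ := IH (m+1) (by omega) p D1
          (fun i hi => hadj i (by omega))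
          (fun i hi j hj h => hinj i (by omega) j (by omega) h)
          (by
            have h1 := mul_pred_pow Q (m+1)
            omega)
        have hsufsplit : ∑ i ∈ Finset.range L, ∑ c, D (p i) c
            = (∑ i ∈ Finset.range (m+1), ∑ c, D (p i) c)
              + ∑ i ∈ Finset.range (L-m-1), ∑ c, D (p (m+1+i)) c := by
          have e : L - (m+1) = L - m - 1 := by omega
          have hIco : ∑ i ∈ Finset.Ico (m+1) L, ∑ c, D (p i) c
              = ∑ i ∈ Finset.range (L-m-1), ∑ c, D (p (m+1+i)) c := by
            rw [Finset.sum_Ico_eq_sum_range, e]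
          have h0 : (∑ i ∈ Finset.Ico 0 (m+1), ∑ c, D (p i) c)
              + ∑ i ∈ Finset.Ico (m+1) L, ∑ c, D (p i) c
              = ∑ i ∈ Finset.range L, ∑ c, D (p i) c := by
            rw [Finset.sum_Ico_consecutive _ (Nat.zero_le (m+1)) (by omega : m+1 ≤ L),
              Finset.range_eq_Ico]
          rw [← h0, hIco, ← Finset.range_eq_Ico]
        have hD2suf : ∀ i, i < L - m - 1 → ∑ c, D2 (p (m+1+i)) c
            = ∑ c, D1 (p (m+1+i)) c := by
          intro i hi
          have heq : D2 (p (m+1+i)) = D1 (p (m+1+i)) := hout2 (p (m+1+i)) (fun j hj => by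
            intro h
            have := hinj (m+1+i) (by omega) j (by omega) h
            omega)
          rw [heq]
        have hD1suf : ∀ i, i < L - m - 1 → ∑ c, D1 (p (m+1+i)) c
            = (∑ c, D (p (m+1+i)) c) + (if i = 0 then ∑ c, y c else 0) := by
          intro i hi
          rcases Nat.eq_zero_or_pos i with h0 | h0
          · subst h0
            have e : m + 1 + 0 = m + 1 := rfl
            rw [e, if_pos rfl, Finset.sum_congr rfl (fun c (_ : c ∈ Finset.univ) => hD1pm1 c),
              Finset.sum_add_distrib]
          · have hne0 : p (m+1+i) ≠ p m := fun h => by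
              have := hinj (m+1+i) (by omega) m (by omega) h
              omega
            have hne1 : p (m+1+i) ≠ p (m+1) := fun h => by
              have := hinj (m+1+i) (by omega) (m+1) (by omega) h
              omega
            rw [hD1other _ hne0 hne1, if_neg (by omega)]
            omega
        have hsufsum : ∑ i ∈ Finset.range (L-m-1), ∑ c, D2 (p (m+1+i)) c
            = (∑ i ∈ Finset.range (L-m-1), ∑ c, D (p (m+1+i)) c) + ∑ c, y c := by
          rw [Finset.sum_congr rfl (fun i hi =>
            (hD2suf i (Finset.mem_range.mp hi)).trans (hD1suf i (Finset.mem_range.mp hi)))]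
          rw [Finset.sum_add_distrib]
          congr 1
          rw [Finset.sum_ite_eq' (Finset.range (L-m-1)) 0 (fun _ => ∑ c, y c)]
          rw [if_pos (Finset.mem_range.mpr (by omega))]
        have hkeysuf : Q * (2^(L-m-1) - 1)
            ≤ ∑ i ∈ Finset.range (L-m-1), ∑ c, D2 (p (m+1+i)) c := by
          rw [hsufsum]
          have hab : 2^(m+1) * 2^(L-m-1) = 2^L := by
            rw [← pow_add]
            congr 1
            omega
          have ha4 : 4 ≤ 2^(m+1) := by
            calc (4:ℕ) = 2^2 := by norm_num
              _ ≤ 2^(m+1) := Nat.pow_le_pow_right (by norm_num) (by omega)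
          have hb2 : 2 ≤ 2^(L-m-1) := by
            calc (2:ℕ) = 2^1 := by norm_num
              _ ≤ 2^(L-m-1) := Nat.pow_le_pow_right (by norm_num) (by omega)
          have hQ1 : 1 ≤ Q := by omega
          have hkeyineq : Q * 2^(m+1) + 2*(Q * 2^(L-m-1)) + 1
              ≤ Q * (2^(m+1) * 2^(L-m-1)) + 2*Q := by
            obtain ⟨a', ha'⟩ : ∃ a', 2^(m+1) = a' + 4 := ⟨2^(m+1) - 4, by omega⟩
            obtain ⟨b', hb'⟩ : ∃ b', 2^(L-m-1) = b' + 2 := ⟨2^(L-m-1) - 2, by omega⟩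
            rw [ha', hb']
            nlinarith [Nat.zero_le (Q * (a' * b')), hQ1]
          have h1 := mul_pred_pow Q (m+1)
          have h2 := mul_pred_pow Q (L-m-1)
          have h3 := mul_pred_pow Q L
          have hQW : Q * (2^(m+1) * 2^(L-m-1)) = Q * 2^L := by rw [hab]
          omega
        obtain ⟨D3, hrtg3, hcov3, hout3⟩ := IH (L-m-1) (by omega) (fun i => p (m+1+i)) D2
          (fun i hi => by
            have h := hadj (m+1+i) (by omega)
            have e : m+1+i+1 = m+1+(i+1) := by omega
            rw [e] at h
            exact h)
          (fun i hi j hj h => by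
            have := hinj (m+1+i) (by omega) (m+1+j) (by omega) h
            omega)
          hkeysuf
        refine ⟨D3, htrans.trans (hrtg2.trans hrtg3), ?_, ?_⟩
        · intro i hi
          rcases Nat.lt_or_ge i (m+1) with him | him
          · have hc := hcov2 i him
            have heq : D3 (p i) = D2 (p i) := hout3 (p i) (fun j hj => by
              intro h
              have := hinj i (by omega) (m+1+j) (by omega) h
              omega)
            rw [heq]
            exact hc
          · have hc : Q ≤ ∑ c, D3 (p (m+1+(i-m-1))) c := hcov3 (i-m-1) (by omega)
            have e : m+1+(i-m-1) = i := by omega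
            rwa [e] at hc
        · intro v hv
          have h3' : D3 v = D2 v := hout3 v (fun j hj => hv (m+1+j) (by omega))
          have h2' : D2 v = D1 v := hout2 v (fun j hj => hv j (by omega))
          rw [h3', h2', hD1other v (hv m (by omega)) (hv (m+1) (by omega))]


end PathCover

theorem path_Q_coverable (g Q n : ℕ) (hg : 0 < g) (hgQ : g < Q)
    (D : Fin n → Fin g → ℕ) (htot : ∑ i, ∑ c, D i c = Q * (2 ^ n - 1)) :
    QCoverable (pathGraph n) Q D := by
  rcases Nat.eq_zero_or_pos n with hn | hn
  · subst hn
    exact ⟨D, Relation.ReflTransGen.refl, fun v => v.elim0⟩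
  · set p : ℕ → Fin n := fun i => ⟨min i (n-1), by omega⟩ with hp
    have hv : ∀ i, i < n → (p i).val = i := by
      intro i hi
      show min i (n-1) = i
      omega
    have hadj : ∀ i, i + 1 < n → (pathGraph n).Adj (p i) (p (i+1)) := by
      intro i hi
      rw [SimpleGraph.pathGraph_adj]
      left
      rw [hv i (by omega), hv (i+1) hi]
    have hinj : ∀ i, i < n → ∀ j, j < n → p i = p j → i = j := by
      intro i hi j hj h
      have hvv : (p i).val = (p j).val := by rw [h]
      rwa [hv i hi, hv j hj] at hvv
    have hsum : ∑ i ∈ Finset.range n, ∑ c, D (p i) c = ∑ v : Fin n, ∑ c, D v c := by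
      rw [← Fin.sum_univ_eq_sum_range (fun i => ∑ c, D (p i) c) n]
      refine Finset.sum_congr rfl (fun v _ => ?_)
      have hpv : p v.val = v := Fin.ext (hv v.val v.isLt)
      rw [hpv]
    obtain ⟨D', hrtg, hcov, -⟩ := PathCover.main (pathGraph n) Q
      (by simpa using hgQ) n p D hadj hinj
      (by rw [hsum, htot])
    refine ⟨D', hrtg, ?_⟩
    intro v
    have hc := hcov v.val v.isLt
    have hpv : p v.val = v := Fin.ext (hv v.val v.isLt)
    rwa [hpv] at hc
end

section
/- Let G and H be graphs and let D be a distribution of pebbles on G □ H. Color each pebble on vertex (w_i, v_j) with color c_i (one color per vertex of G), and let D̃ be the resulting g-colored distribution on H obtained by collapsing G □ {v_j} to the vertex v_j (g = |V(G)|). If D̃ is γ(G)-coverable by color-respecting pebbling steps on H, then D is coverable on G □ H. -/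
open SimpleGraph Finset

lemma step_mono {V : Type*} [DecidableEq V] {G : SimpleGraph V} {D D₁ E : V → ℕ}
    (h : PebblingStep G D D₁) (hle : ∀ w, D w ≤ E w) :
    ∃ E₁, PebblingStep G E E₁ ∧ ∀ w, D₁ w ≤ E₁ w := by
  obtain ⟨u, v, hadj, h2, rfl⟩ := h
  refine ⟨_, ⟨u, v, hadj, le_trans h2 (hle u), rfl⟩, fun w => ?_⟩
  dsimp only
  split_ifs with h1 h2
  · exact Nat.sub_le_sub_right (hle u) 2
  · exact Nat.add_le_add_right (hle v) 1
  · exact hle w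

lemma rtg_mono {V : Type*} [DecidableEq V] {G : SimpleGraph V} {D D' E : V → ℕ}
    (h : Relation.ReflTransGen (PebblingStep G) D D') (hle : ∀ w, D w ≤ E w) :
    ∃ E', Relation.ReflTransGen (PebblingStep G) E E' ∧ ∀ w, D' w ≤ E' w := by
  induction h with
  | refl => exact ⟨E, .refl, hle⟩
  | tail _ hstep ih =>
    obtain ⟨E₁, hr, hle₁⟩ := ih
    obtain ⟨E₂, hs, hle₂⟩ := step_mono hstep hle₁
    exact ⟨E₂, hr.tail hs, hle₂⟩

lemma shift {V : Type*} [DecidableEq V] {G : SimpleGraph V} {u x : V} (hadj : G.Adj u x) :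
    ∀ (m : ℕ) (D : V → ℕ), 2 * m ≤ D u →
    ∃ D', Relation.ReflTransGen (PebblingStep G) D D' ∧
      D' = fun w => if w = u then D u - 2 * m else if w = x then D x + m else D w := by
  intro m
  induction m with
  | zero =>
    intro D _
    refine ⟨D, .refl, funext fun w => ?_⟩
    by_cases h1 : w = u
    · subst h1; simp
    · by_cases h2 : w = x
      · subst h2; simp [h1]
      · simp [h1, h2]
  | succ m ih =>
    intro D hD
    set D₂ : V → ℕ := fun w => if w = u then D u - 2 else if w = x then D x + 1 else D w with hD₂
    have hstep : PebblingStep G D D₂ := ⟨u, x, hadj, by omega, rfl⟩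
    have h2u : D₂ u = D u - 2 := by simp [hD₂]
    have h2x : D₂ x = D x + 1 := by simp [hD₂, hadj.ne']
    obtain ⟨D₃, hr, hD₃⟩ := ih D₂ (by omega)
    refine ⟨D₃, (Relation.ReflTransGen.single hstep).trans hr, ?_⟩
    rw [hD₃]
    funext w
    by_cases h1 : w = u
    · simp [h1, h2u]; omega
    · by_cases h2 : w = x
      · simp [h1, h2, h2x, hadj.ne']; omega
      · simp [h1, h2, hD₂]

lemma walk_move {V : Type*} [DecidableEq V] {G : SimpleGraph V} {u v : V} (p : G.Walk u v) :
    ∀ D : V → ℕ, 2 ^ p.length ≤ D u →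
    ∃ D', Relation.ReflTransGen (PebblingStep G) D D' ∧ 1 ≤ D' v ∧
      (∀ w, w ≠ u → D w ≤ D' w) ∧ D u - 2 ^ p.length ≤ D' u := by
  induction p with
  | nil =>
    intro D h
    simp only [SimpleGraph.Walk.length_nil, pow_zero] at h
    exact ⟨D, .refl, h, fun w _ => le_refl _, Nat.sub_le _ _⟩
  | @cons a x v hadj p ih =>
    intro D hD
    rw [SimpleGraph.Walk.length_cons] at hD ⊢
    have hpow : (2 : ℕ) ^ (p.length + 1) = 2 * 2 ^ p.length := by ring
    obtain ⟨D₁, hr₁, hD₁⟩ := shift hadj (2 ^ p.length) D (by omega)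
    have hx : D₁ x = D x + 2 ^ p.length := by rw [hD₁]; simp [hadj.ne']
    have ha : D₁ a = D a - 2 * 2 ^ p.length := by rw [hD₁]; simp
    have hother : ∀ w, w ≠ a → w ≠ x → D₁ w = D w := by
      intro w h1 h2; rw [hD₁]; simp [h1, h2]
    obtain ⟨D₂, hr₂, h1v, hmono, hxlow⟩ := ih D₁ (by omega)
    refine ⟨D₂, hr₁.trans hr₂, h1v, ?_, ?_⟩
    · intro w hw
      by_cases h2 : w = x
      · subst h2
        have := hxlow
        omega
      · rw [← hother w hw h2]; exact hmono w h2
    · have h1 := hmono a hadj.ne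
      generalize hm : (2:ℕ) ^ p.length = m at *
      omega

lemma exists_big_pile {V : Type*} [Fintype V] [Nonempty V] (D : V → ℕ) (B : ℕ)
    (h : Fintype.card V * B ≤ ∑ w, D w) : ∃ u, B ≤ D u := by
  by_contra hc
  push_neg at hc
  have : ∑ w, D w < ∑ _w : V, B :=
    Finset.sum_lt_sum_of_nonempty Finset.univ_nonempty fun w _ => hc w
  rw [Finset.sum_const, Finset.card_univ, smul_eq_mul] at this
  omega

lemma cover_aux {V : Type*} [DecidableEq V] [Fintype V] {G : SimpleGraph V}
    (hG : G.Connected) (S : Finset V) :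
    ∀ D : V → ℕ,
      (S.card + Fintype.card V) * 2 ^ Fintype.card V ≤ ∑ w, D w →
      ∃ D', Relation.ReflTransGen (PebblingStep G) D D' ∧
        (∀ w ∈ S, 1 ≤ D' w) ∧ (∀ w, min (D w) 1 ≤ D' w) := by
  haveI : Nonempty V := hG.nonempty
  set g := Fintype.card V with hg
  have hg1 : 1 ≤ g := Fintype.card_pos
  induction S using Finset.induction_on with
  | empty =>
    intro D _
    exact ⟨D, .refl, fun w hw => absurd hw (by simp), fun w => min_le_left _ _⟩
  | @insert a S ha ih =>
    intro D hsum
    rw [Finset.card_insert_of_notMem ha] at hsum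
    -- find a big pile
    obtain ⟨u, hu⟩ : ∃ u, 2 ^ g ≤ D u := by
      apply exists_big_pile
      calc g * 2 ^ g ≤ (S.card + 1 + g) * 2 ^ g := by
            apply Nat.mul_le_mul_right; omega
        _ ≤ ∑ w, D w := hsum
    -- a path from u to a
    obtain ⟨w⟩ := hG.preconnected u a
    set p := w.toPath.1 with hp
    have hlen : p.length < g := w.toPath.2.length_lt
    have hlen2 : 2 ^ p.length ≤ 2 ^ (g - 1) := Nat.pow_le_pow_right (by omega) (by omega)
    have hgg : 2 ^ g = 2 * 2 ^ (g - 1) := by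
      rw [← pow_succ']
      congr 1
      omega
    obtain ⟨D₁, hr₁, h1a, hmono, hulow⟩ := walk_move p D (by omega)
    -- sum bound for D₁
    have hsum1 : ∑ w, D w ≤ (∑ w, D₁ w) + 2 ^ p.length := by
      have hpt : ∀ x, D x ≤ D₁ x + (if x = u then 2 ^ p.length else 0) := by
        intro x
        by_cases hx : x = u
        · subst hx; simp; omega
        · simp [hx]; exact hmono x hx
      calc ∑ w, D w ≤ ∑ x, (D₁ x + if x = u then 2 ^ p.length else 0) :=
            Finset.sum_le_sum fun x _ => hpt x
        _ = (∑ w, D₁ w) + 2 ^ p.length := by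
            rw [Finset.sum_add_distrib, Finset.sum_ite_eq' Finset.univ u]
            simp
    have hIH : (S.card + g) * 2 ^ g ≤ ∑ w, D₁ w := by
      have key : (S.card + g) * 2 ^ g + 2 ^ g ≤ (∑ w, D₁ w) + 2 ^ g := by
        calc (S.card + g) * 2 ^ g + 2 ^ g = (S.card + 1 + g) * 2 ^ g := by ring
          _ ≤ ∑ w, D w := hsum
          _ ≤ (∑ w, D₁ w) + 2 ^ p.length := hsum1
          _ ≤ (∑ w, D₁ w) + 2 ^ g := by
              have : 2 ^ p.length ≤ 2 ^ g := Nat.pow_le_pow_right (by omega) (by omega)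
              omega
      omega
    obtain ⟨D₂, hr₂, hS, hmin₁⟩ := ih D₁ hIH
    refine ⟨D₂, hr₁.trans hr₂, ?_, ?_⟩
    · intro x hx
      rcases Finset.mem_insert.mp hx with rfl | hx
      · have := hmin₁ x
        omega
      · exact hS x hx
    · intro x
      rcases Nat.eq_zero_or_pos (D x) with h0 | h0
      · simp [h0]
      · have h1 : 1 ≤ D₂ x := by
          by_cases hx : x = u
          · subst hx
            have hD1u : 1 ≤ D₁ x := by omega
            have := hmin₁ x
            omega
          · have := hmono x hx
            have := hmin₁ x
            omega
        omega

lemma coverSet_nonempty {V : Type*} [DecidableEq V] [Fintype V] {G : SimpleGraph V}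
    (hG : G.Connected) :
    {N | ∀ D : V → ℕ, ∑ v, D v = N → Coverable G D}.Nonempty := by
  refine ⟨(Fintype.card V + Fintype.card V) * 2 ^ Fintype.card V, fun D hD => ?_⟩
  obtain ⟨D', hr, hall, _⟩ := cover_aux hG Finset.univ D (by rw [hD, Finset.card_univ])
  exact ⟨D', hr, fun v => hall v (Finset.mem_univ v)⟩

lemma exists_subdist {V : Type*} [Fintype V] [DecidableEq V] (m : ℕ) :
    ∀ (k : ℕ) (E : V → ℕ), ∑ v, E v = m + k → ∃ D : V → ℕ, (∀ v, D v ≤ E v) ∧ ∑ v, D v = m := by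
  intro k
  induction k with
  | zero => intro E hE; exact ⟨E, fun v => le_refl _, by omega⟩
  | succ k ih =>
    intro E hE
    obtain ⟨v, hv⟩ : ∃ v, 0 < E v := by
      by_contra hc
      push_neg at hc
      have : ∑ v, E v = 0 := Finset.sum_eq_zero fun v _ => Nat.le_zero.mp (hc v)
      omega
    have hsplit : E v + ∑ w ∈ Finset.univ.erase v, E w = ∑ w, E w :=
      Finset.add_sum_erase _ _ (Finset.mem_univ v)
    set E' := Function.update E v (E v - 1) with hE'
    have hsum' : ∑ w, E' w = m + k := by
      have h1 : ∑ w, E' w = E v - 1 + ∑ w ∈ Finset.univ.erase v, E w := by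
        rw [hE', Finset.sum_update_of_mem (Finset.mem_univ v),
          Finset.sdiff_singleton_eq_erase]
      have h2 : ∀ w ∈ Finset.univ.erase v, E' w = E w := by
        intro w hw
        rw [hE', Function.update_of_ne (Finset.ne_of_mem_erase hw)]
      rw [h1]
      omega
    obtain ⟨D, hle, hm⟩ := ih E' hsum'
    refine ⟨D, fun w => ?_, hm⟩
    refine le_trans (hle w) ?_
    by_cases hw : w = v
    · subst hw; simp [hE']
    · simp [hE', hw]

lemma coverable_of_ge {V : Type*} [DecidableEq V] [Fintype V] {G : SimpleGraph V}
    (hG : G.Connected) (D : V → ℕ) (h : coverPebblingNumber G ≤ ∑ v, D v) :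
    Coverable G D := by
  have hmem : coverPebblingNumber G ∈ {N | ∀ D : V → ℕ, ∑ v, D v = N → Coverable G D} :=
    Nat.sInf_mem (coverSet_nonempty hG)
  obtain ⟨k, hk⟩ := Nat.exists_eq_add_of_le h
  obtain ⟨D₀, hle, hsum⟩ := exists_subdist (coverPebblingNumber G) k D hk
  obtain ⟨D₁, hr, h1⟩ := hmem D₀ hsum
  obtain ⟨D₂, hr₂, hle₂⟩ := rtg_mono hr hle
  exact ⟨D₂, hr₂, fun v => le_trans (h1 v) (hle₂ v)⟩

lemma colorStep_to_prodStep {Vg Vh : Type*} [DecidableEq Vg] [DecidableEq Vh]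
    (G : SimpleGraph Vg) (H : SimpleGraph Vh) {f f' : Vh → Vg → ℕ}
    (h : ColorStep H f f') :
    PebblingStep (G □ H) (fun p => f p.2 p.1) (fun p => f' p.2 p.1) := by
  obtain ⟨u, v, c, hadj, h2, rfl⟩ := h
  refine ⟨(c, u), (c, v), Or.inr ⟨hadj, rfl⟩, h2, ?_⟩
  funext p
  obtain ⟨a, b⟩ := p
  simp only [Prod.mk.injEq]
  by_cases h1 : b = u ∧ a = c
  · simp [h1.1, h1.2]
  · by_cases h3 : b = v ∧ a = c
    · have hne : ¬(a = c ∧ b = u) := by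
        rintro ⟨rfl, rfl⟩
        exact hadj.ne' h3.1.symm
      simp [h3.1, h3.2, hadj.ne', hne]
    · have hne1 : ¬(a = c ∧ b = u) := fun hh => h1 ⟨hh.2, hh.1⟩
      have hne2 : ¬(a = c ∧ b = v) := fun hh => h3 ⟨hh.2, hh.1⟩
      simp [h1, h3, hne1, hne2]

lemma fiberStep_to_prodStep {Vg Vh : Type*} [DecidableEq Vg] [DecidableEq Vh]
    (G : SimpleGraph Vg) (H : SimpleGraph Vh) (v₀ : Vh) (F : Vg × Vh → ℕ)
    {f f' : Vg → ℕ} (h : PebblingStep G f f') :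
    PebblingStep (G □ H) (fun p => if p.2 = v₀ then f p.1 else F p)
      (fun p => if p.2 = v₀ then f' p.1 else F p) := by
  obtain ⟨u, x, hadj, h2, rfl⟩ := h
  refine ⟨(u, v₀), (x, v₀), Or.inl ⟨hadj, rfl⟩, by simpa using h2, ?_⟩
  funext p
  obtain ⟨a, b⟩ := p
  simp only [Prod.mk.injEq]
  by_cases hb : b = v₀
  · subst hb
    by_cases h1 : a = u
    · simp [h1]
    · by_cases h3 : a = x
      · simp [h1, h3]
      · simp [h1, h3]
  · simp [hb]

lemma fibers_cover {Vg Vh : Type*} [DecidableEq Vg] [Fintype Vg] [DecidableEq Vh]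
    {G : SimpleGraph Vg} (H : SimpleGraph Vh) (hG : G.Connected) (S : Finset Vh) :
    ∀ E : Vg × Vh → ℕ, (∀ v ∈ S, coverPebblingNumber G ≤ ∑ w, E (w, v)) →
    ∃ E', Relation.ReflTransGen (PebblingStep (G □ H)) E E' ∧
      (∀ v ∈ S, ∀ w, 1 ≤ E' (w, v)) ∧ (∀ v ∉ S, ∀ w, E' (w, v) = E (w, v)) := by
  induction S using Finset.induction_on with
  | empty =>
    intro E _
    exact ⟨E, .refl, fun v hv => absurd hv (by simp), fun _ _ _ => rfl⟩
  | @insert a S ha ih =>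
    intro E hsum
    -- cover fiber a
    obtain ⟨f', hrf, hf1⟩ := coverable_of_ge hG (fun w => E (w, a))
      (hsum a (Finset.mem_insert_self a S))
    set E₁ : Vg × Vh → ℕ := fun p => if p.2 = a then f' p.1 else E p with hE₁
    have hr₁ : Relation.ReflTransGen (PebblingStep (G □ H)) E E₁ := by
      have := Relation.ReflTransGen.lift
        (fun (f : Vg → ℕ) (p : Vg × Vh) => if p.2 = a then f p.1 else E p)
        (fun f₁ f₂ hstep => fiberStep_to_prodStep G H a E hstep) _ _ hrf
      have hEeq : (fun (f : Vg → ℕ) (p : Vg × Vh) => if p.2 = a then f p.1 else E p)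
          (fun w => E (w, a)) = E := by
        funext ⟨w, b⟩
        by_cases hb : b = a <;> simp [hb]
      change Relation.ReflTransGen _ ((fun (f : Vg → ℕ) (p : Vg × Vh) => if p.2 = a then f p.1 else E p) (fun w => E (w, a))) _ at this
      rw [hEeq] at this
      exact this
    obtain ⟨E₂, hr₂, hcov, hfix⟩ := ih E₁ (fun v hv => by
      have hva : v ≠ a := fun hh => ha (hh ▸ hv)
      have : ∀ w, E₁ (w, v) = E (w, v) := fun w => by simp [hE₁, hva]
      rw [Finset.sum_congr rfl fun w _ => this w]
      exact hsum v (Finset.mem_insert_of_mem hv))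
    refine ⟨E₂, hr₁.trans hr₂, ?_, ?_⟩
    · intro v hv w
      rcases Finset.mem_insert.mp hv with rfl | hv
      · rw [hfix v ha w]
        simpa [hE₁] using hf1 w
      · exact hcov v hv w
    · intro v hv w
      have hva : v ≠ a := fun hh => hv (hh ▸ Finset.mem_insert_self a S)
      rw [hfix v (fun hh => hv (Finset.mem_insert_of_mem hh)) w]
      simp [hE₁, hva]

theorem prod_coverable_of_colored_coverable {Vg Vh : Type*}
    [DecidableEq Vg] [Fintype Vg] [DecidableEq Vh] [Fintype Vh] [Nonempty Vg]
    (G : SimpleGraph Vg) (H : SimpleGraph Vh) (hG : G.Connected)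
    (D : Vg × Vh → ℕ)
    (h : QCoverable H (coverPebblingNumber G) (fun v w => D (w, v))) :
    Coverable (G □ H) D := by
  obtain ⟨D', hrtg, hcov⟩ := h
  have hrtg2 := Relation.ReflTransGen.lift
    (fun (f : Vh → Vg → ℕ) (p : Vg × Vh) => f p.2 p.1)
    (fun f₁ f₂ hstep => colorStep_to_prodStep G H hstep) _ _ hrtg
  have hDeq : (fun (f : Vh → Vg → ℕ) (p : Vg × Vh) => f p.2 p.1) (fun v w => D (w, v)) = D := by
    funext ⟨a, b⟩
    rfl
  change Relation.ReflTransGen _ ((fun (f : Vh → Vg → ℕ) (p : Vg × Vh) => f p.2 p.1) (fun v w => D (w, v))) _ at hrtg2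
  rw [hDeq] at hrtg2
  obtain ⟨E', hrtg3, hall, _⟩ := fibers_cover H hG Finset.univ
    (fun p => D' p.2 p.1) (fun v _ => hcov v)
  exact ⟨E', hrtg2.trans hrtg3, fun ⟨w, v⟩ => hall v (Finset.mem_univ v) w⟩
end
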